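/- arXiv:1504.03271 — 2 statements merged into one kernel-verified Lean document; each statement's English description precedes it below -/
import Mathlib

section
/- Let M = U ×_f V be a warped product whose metric g is super generalized recurrent (SGK_n) with associated 1-forms (Π, Φ, Ψ, Θ). If there exist smooth functions λ, μ on U such that T_{ab} = λ S̄_{ab} + μ ḡ_{ab}, then the base metric ḡ is super generalized recurrent (SGK_p), i.e. there exist 1-forms (Π', Φ', Ψ', Θ') on U × V such that R̄_{abcd,e} = Π'_e R̄_{abcd} + Φ'_e (S̄∧S̄)_{abcd} + Ψ'_e (ḡ∧S̄)_{abcd} + Θ'_e (ḡ∧ḡ)_{abcd} for all indices. -/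
noncomputable section

/-- Partial derivative of a scalar function along the `j`-th coordinate direction. -/
def pd {k : ℕ} (F : (Fin k → ℝ) → ℝ) (j : Fin k) (x : Fin k → ℝ) : ℝ :=
  fderiv ℝ F x (Pi.single j 1)

/-- Christoffel symbols `Γ^i_{jl}` of a metric `h` with (pointwise) inverse `hinv`. -/
def Christoffel {k : ℕ} (h hinv : (Fin k → ℝ) → Fin k → Fin k → ℝ)
    (i j l : Fin k) (x : Fin k → ℝ) : ℝ :=
  (1 / 2) * ∑ r, hinv x i r *
    (pd (fun y => h y r l) j x + pd (fun y => h y j r) l x - pd (fun y => h y j l) r x)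

/-- The (0,4) Riemann-Christoffel curvature tensor of `h`. -/
def Riem {k : ℕ} (h hinv : (Fin k → ℝ) → Fin k → Fin k → ℝ)
    (x : Fin k → ℝ) (i j s l : Fin k) : ℝ :=
  ∑ r, h x i r *
    (pd (Christoffel h hinv r l j) s x - pd (Christoffel h hinv r s j) l x
      + (∑ t, Christoffel h hinv r s t x * Christoffel h hinv t l j x)
      - ∑ t, Christoffel h hinv r l t x * Christoffel h hinv t s j x)

/-- The Ricci tensor of `h`. -/
def Ric {k : ℕ} (h hinv : (Fin k → ℝ) → Fin k → Fin k → ℝ)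
    (x : Fin k → ℝ) (j l : Fin k) : ℝ :=
  ∑ i, ∑ s, hinv x i s * Riem h hinv x i j s l

/-- The scalar curvature of `h`. -/
def Scal {k : ℕ} (h hinv : (Fin k → ℝ) → Fin k → Fin k → ℝ) (x : Fin k → ℝ) : ℝ :=
  ∑ j, ∑ l, hinv x j l * Ric h hinv x j l

/-- Covariant derivative (w.r.t. the Levi-Civita connection of `h`) of a (0,4) tensor field. -/
def cov4 {k : ℕ} (h hinv : (Fin k → ℝ) → Fin k → Fin k → ℝ)
    (T : (Fin k → ℝ) → Fin k → Fin k → Fin k → Fin k → ℝ)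
    (x : Fin k → ℝ) (i j s l m : Fin k) : ℝ :=
  pd (fun y => T y i j s l) m x
    - (∑ r, Christoffel h hinv r m i x * T x r j s l)
    - (∑ r, Christoffel h hinv r m j x * T x i r s l)
    - (∑ r, Christoffel h hinv r m s x * T x i j r l)
    - ∑ r, Christoffel h hinv r m l x * T x i j s r

/-- Covariant derivative of a (0,2) tensor field. -/
def cov2 {k : ℕ} (h hinv : (Fin k → ℝ) → Fin k → Fin k → ℝ)
    (T : (Fin k → ℝ) → Fin k → Fin k → ℝ) (x : Fin k → ℝ) (i j m : Fin k) : ℝ :=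
  pd (fun y => T y i j) m x
    - (∑ r, Christoffel h hinv r m i x * T x r j)
    - ∑ r, Christoffel h hinv r m j x * T x i r

/-- Kulkarni-Nomizu product of two (0,2) tensors. -/
def KN {k : ℕ} (A E : (Fin k → ℝ) → Fin k → Fin k → ℝ)
    (x : Fin k → ℝ) (i j s l : Fin k) : ℝ :=
  A x i l * E x j s + A x j s * E x i l - A x i s * E x j l - A x j l * E x i s

/-- The Gaussian curvature tensor `G_{ijsl} = h_{il}h_{js} - h_{is}h_{jl}`. -/
def Gt {k : ℕ} (h : (Fin k → ℝ) → Fin k → Fin k → ℝ)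
    (x : Fin k → ℝ) (i j s l : Fin k) : ℝ :=
  h x i l * h x j s - h x i s * h x j l

/-- The conformal (Weyl) curvature tensor of a `k`-dimensional metric `h`. -/
def Weyl {k : ℕ} (h hinv : (Fin k → ℝ) → Fin k → Fin k → ℝ)
    (x : Fin k → ℝ) (i j s l : Fin k) : ℝ :=
  Riem h hinv x i j s l - (1 / ((k : ℝ) - 2)) * KN h (Ric h hinv) x i j s l
    + (Scal h hinv x / (2 * ((k : ℝ) - 1) * ((k : ℝ) - 2))) * KN h h x i j s l

/-- Recurrency condition at a point. -/
def Recur {k : ℕ} (h hinv : (Fin k → ℝ) → Fin k → Fin k → ℝ)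
    (piF : (Fin k → ℝ) → Fin k → ℝ) (x : Fin k → ℝ) : Prop :=
  ∀ i j s l m, cov4 h hinv (Riem h hinv) x i j s l m = piF x m * Riem h hinv x i j s l

/-- Hyper generalized recurrency condition at a point. -/
def HGK {k : ℕ} (h hinv : (Fin k → ℝ) → Fin k → Fin k → ℝ)
    (piF psiF : (Fin k → ℝ) → Fin k → ℝ) (x : Fin k → ℝ) : Prop :=
  ∀ i j s l m, cov4 h hinv (Riem h hinv) x i j s l m =
    piF x m * Riem h hinv x i j s l + psiF x m * KN h (Ric h hinv) x i j s l

/-- Weakly generalized recurrency condition at a point. -/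
def WGK {k : ℕ} (h hinv : (Fin k → ℝ) → Fin k → Fin k → ℝ)
    (piF phiF : (Fin k → ℝ) → Fin k → ℝ) (x : Fin k → ℝ) : Prop :=
  ∀ i j s l m, cov4 h hinv (Riem h hinv) x i j s l m =
    piF x m * Riem h hinv x i j s l
      + phiF x m * KN (Ric h hinv) (Ric h hinv) x i j s l

/-- Super generalized recurrency condition at a point. -/
def SGK {k : ℕ} (h hinv : (Fin k → ℝ) → Fin k → Fin k → ℝ)
    (piF phiF psiF thetaF : (Fin k → ℝ) → Fin k → ℝ) (x : Fin k → ℝ) : Prop :=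
  ∀ i j s l m, cov4 h hinv (Riem h hinv) x i j s l m =
    piF x m * Riem h hinv x i j s l
      + phiF x m * KN (Ric h hinv) (Ric h hinv) x i j s l
      + psiF x m * KN h (Ric h hinv) x i j s l
      + thetaF x m * KN h h x i j s l

/-- Base-point projection of a point of `M = U × V`. -/
def bpt {p q : ℕ} (z : Fin (p + q) → ℝ) : Fin p → ℝ := fun a => z (Fin.castAdd q a)

/-- Fiber-point projection of a point of `M = U × V`. -/
def fpt {p q : ℕ} (z : Fin (p + q) → ℝ) : Fin q → ℝ := fun a => z (Fin.natAdd p a)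

/-- Block-diagonal combination of a base tensor `A` and a fiber tensor `B` scaled by `c`. -/
def wPair {p q : ℕ} (A : (Fin p → ℝ) → Fin p → Fin p → ℝ)
    (B : (Fin q → ℝ) → Fin q → Fin q → ℝ) (c : (Fin p → ℝ) → ℝ)
    (z : Fin (p + q) → ℝ) (i j : Fin (p + q)) : ℝ :=
  Sum.elim
    (fun a => Sum.elim (fun b => A (bpt z) a b) (fun _ => (0 : ℝ)) (finSumFinEquiv.symm j))
    (fun a => Sum.elim (fun _ => (0 : ℝ)) (fun b => c (bpt z) * B (fpt z) a b)
      (finSumFinEquiv.symm j))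
    (finSumFinEquiv.symm i)

/-- The warped product metric `g = ḡ ⊕ f g̃`. -/
def wMet {p q : ℕ} (gbar : (Fin p → ℝ) → Fin p → Fin p → ℝ)
    (gtil : (Fin q → ℝ) → Fin q → Fin q → ℝ) (f : (Fin p → ℝ) → ℝ) :
    (Fin (p + q) → ℝ) → Fin (p + q) → Fin (p + q) → ℝ :=
  wPair gbar gtil f

/-- The inverse of the warped product metric. -/
def wMetInv {p q : ℕ} (gbinv : (Fin p → ℝ) → Fin p → Fin p → ℝ)
    (gtinv : (Fin q → ℝ) → Fin q → Fin q → ℝ) (f : (Fin p → ℝ) → ℝ) :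
    (Fin (p + q) → ℝ) → Fin (p + q) → Fin (p + q) → ℝ :=
  wPair gbinv gtinv fun x => (f x)⁻¹

/-- The set of points of `M = U × V` inside `ℝ^{p+q}`. -/
def Mset {p q : ℕ} (U : Set (Fin p → ℝ)) (V : Set (Fin q → ℝ)) : Set (Fin (p + q) → ℝ) :=
  {z | bpt z ∈ U ∧ fpt z ∈ V}

/-- The tensor `T_{ab} = -(1/(2f))(f_{a,b} - (1/(2f)) f_a f_b)`. -/
def Tten {p : ℕ} (gbar gbinv : (Fin p → ℝ) → Fin p → Fin p → ℝ) (f : (Fin p → ℝ) → ℝ)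
    (x : Fin p → ℝ) (a b : Fin p) : ℝ :=
  -(1 / (2 * f x)) *
    ((pd (fun y => pd f a y) b x - ∑ c, Christoffel gbar gbinv c b a x * pd f c x)
      - (1 / (2 * f x)) * pd f a x * pd f b x)

/-- `tr T = ḡ^{ab} T_{ab}`. -/
def trT {p : ℕ} (gbar gbinv : (Fin p → ℝ) → Fin p → Fin p → ℝ) (f : (Fin p → ℝ) → ℝ)
    (x : Fin p → ℝ) : ℝ :=
  ∑ a, ∑ b, gbinv x a b * Tten gbar gbinv f x a b

/-- `P = (1/(4f²)) ḡ^{ab} f_a f_b`. -/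
def Pw {p : ℕ} (gbinv : (Fin p → ℝ) → Fin p → Fin p → ℝ) (f : (Fin p → ℝ) → ℝ)
    (x : Fin p → ℝ) : ℝ :=
  (1 / (4 * f x ^ 2)) * ∑ a, ∑ b, gbinv x a b * pd f a x * pd f b x

/-- `Q = f((n-p-1)P - tr T)`, with `n - p = q`. -/
def Qw {p : ℕ} (q : ℕ) (gbar gbinv : (Fin p → ℝ) → Fin p → Fin p → ℝ)
    (f : (Fin p → ℝ) → ℝ) (x : Fin p → ℝ) : ℝ :=
  f x * (((q : ℝ) - 1) * Pw gbinv f x - trT gbar gbinv f x)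

namespace WarpAux

open Finset

/-! ### Generic calculus lemmas for `pd` -/

lemma pd_congr_open {k : ℕ} {S : Set (Fin k → ℝ)} (hS : IsOpen S)
    {F G : (Fin k → ℝ) → ℝ} (h : ∀ y ∈ S, F y = G y) {z : Fin k → ℝ} (hz : z ∈ S)
    (j : Fin k) : pd F j z = pd G j z := by
  have hev : F =ᶠ[nhds z] G := Filter.eventuallyEq_of_mem (hS.mem_nhds hz) h
  simp only [pd, hev.fderiv_eq]

lemma pd_comp_clm {k l : ℕ} (F : (Fin l → ℝ) → ℝ) (L : (Fin k → ℝ) →L[ℝ] (Fin l → ℝ))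
    (z : Fin k → ℝ) (j : Fin k) (hF : DifferentiableAt ℝ F (L z)) :
    pd (fun y => F (L y)) j z = fderiv ℝ F (L z) (L (Pi.single j 1)) := by
  unfold pd
  rw [show (fun y => F (L y)) = F ∘ L from rfl, fderiv_comp z hF L.differentiableAt, L.fderiv]
  rfl

lemma pd_const_line {k : ℕ} (F : (Fin k → ℝ) → ℝ) (j : Fin k) (z : Fin k → ℝ)
    (h : ∀ t : ℝ, F (z + t • (Pi.single j 1 : Fin k → ℝ)) = F z) : pd F j z = 0 := by
  by_cases hd : DifferentiableAt ℝ F z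
  · have h1 : HasDerivAt (fun t : ℝ => z + t • (Pi.single j 1 : Fin k → ℝ))
        (Pi.single j 1 : Fin k → ℝ) 0 := by
      simpa using ((hasDerivAt_id (0:ℝ)).smul_const (Pi.single j 1 : Fin k → ℝ)).const_add z
    have h0 : z + (0:ℝ) • (Pi.single j 1 : Fin k → ℝ) = z := by simp
    have h2 : HasDerivAt (fun t : ℝ => F (z + t • (Pi.single j 1 : Fin k → ℝ)))
        (fderiv ℝ F z (Pi.single j 1)) 0 := by
      have hF : HasFDerivAt F (fderiv ℝ F z)
          ((fun t : ℝ => z + t • (Pi.single j 1 : Fin k → ℝ)) 0) := by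
        simpa [h0] using hd.hasFDerivAt
      exact hF.comp_hasDerivAt 0 h1
    have h3 : HasDerivAt (fun t : ℝ => F (z + t • (Pi.single j 1 : Fin k → ℝ))) 0 0 := by
      have hc : (fun t : ℝ => F (z + t • (Pi.single j 1 : Fin k → ℝ))) = fun _ => F z := by
        funext t; exact h t
      rw [hc]; exact hasDerivAt_const _ _
    exact h2.unique h3
  · simp [pd, fderiv_zero_of_not_differentiableAt hd]

lemma pd_const {k : ℕ} (c : ℝ) (j : Fin k) (z : Fin k → ℝ) :
    pd (fun _ => c) j z = 0 := by simp [pd]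

lemma pd_mul {k : ℕ} {F G : (Fin k → ℝ) → ℝ} (j : Fin k) (z : Fin k → ℝ)
    (hF : DifferentiableAt ℝ F z) (hG : DifferentiableAt ℝ G z) :
    pd (fun y => F y * G y) j z = pd F j z * G z + F z * pd G j z := by
  unfold pd
  rw [fderiv_fun_mul hF hG]
  simp only [ContinuousLinearMap.add_apply, ContinuousLinearMap.smul_apply, smul_eq_mul]
  ring

lemma pd_mul_const {k : ℕ} {F : (Fin k → ℝ) → ℝ} (c : ℝ) (j : Fin k) (z : Fin k → ℝ)
    (hF : DifferentiableAt ℝ F z) :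
    pd (fun y => F y * c) j z = pd F j z * c := by
  unfold pd
  rw [fderiv_mul_const hF]
  simp [mul_comm]

lemma pd_inv {k : ℕ} {F : (Fin k → ℝ) → ℝ} (j : Fin k) (z : Fin k → ℝ)
    (hF : DifferentiableAt ℝ F z) (hz : F z ≠ 0) :
    pd (fun y => (F y)⁻¹) j z = -pd F j z / F z ^ 2 := by
  unfold pd
  have hinv : DifferentiableAt ℝ (fun x : ℝ => x⁻¹) (F z) := differentiableAt_inv hz
  rw [show (fun y => (F y)⁻¹) = (fun x : ℝ => x⁻¹) ∘ F from rfl, fderiv_comp z hinv hF]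
  rw [fderiv_inv]
  simp only [ContinuousLinearMap.coe_comp', Function.comp_apply,
    ContinuousLinearMap.smulRight_apply, ContinuousLinearMap.one_apply, smul_eq_mul,
    ContinuousLinearMap.toSpanSingleton_apply]
  ring

/-! ### Projections as continuous linear maps -/

variable {p q : ℕ}

def bptL (p q : ℕ) : (Fin (p + q) → ℝ) →L[ℝ] (Fin p → ℝ) :=
  ContinuousLinearMap.pi fun a => ContinuousLinearMap.proj (Fin.castAdd q a)
def fptL (p q : ℕ) : (Fin (p + q) → ℝ) →L[ℝ] (Fin q → ℝ) :=
  ContinuousLinearMap.pi fun a => ContinuousLinearMap.proj (Fin.natAdd p a)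

lemma bptL_apply (z : Fin (p + q) → ℝ) : bptL p q z = bpt z := rfl
lemma fptL_apply (z : Fin (p + q) → ℝ) : fptL p q z = fpt z := rfl

lemma castAdd_ne_natAdd (a : Fin p) (m : Fin q) : Fin.castAdd q a ≠ Fin.natAdd p m := by
  intro h
  have h2 := congrArg Fin.val h
  have h3 := a.isLt
  simp only [Fin.coe_castAdd, Fin.coe_natAdd] at h2
  omega

lemma natAdd_inj (x y : Fin q) : Fin.natAdd p x = Fin.natAdd p y ↔ x = y := by
  constructor
  · intro h
    have h2 := congrArg Fin.val h
    simp only [Fin.coe_natAdd] at h2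
    exact Fin.ext (by omega)
  · intro h; rw [h]

lemma bptL_single_cast (e : Fin p) :
    bptL p q (Pi.single (Fin.castAdd q e) 1) = (Pi.single e 1 : Fin p → ℝ) := by
  funext a
  simp only [bptL_apply, bpt, Pi.single_apply]
  by_cases h : a = e <;> simp [h, (Fin.castAdd_injective p q).eq_iff]
lemma bptL_single_nat (m : Fin q) :
    bptL p q (Pi.single (Fin.natAdd p m) 1) = 0 := by
  funext a
  simp [bptL_apply, bpt, Pi.single_apply, castAdd_ne_natAdd a m]
lemma fptL_single_nat (m : Fin q) :
    fptL p q (Pi.single (Fin.natAdd p m) 1) = (Pi.single m 1 : Fin q → ℝ) := by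
  funext a
  simp only [fptL_apply, fpt, Pi.single_apply]
  by_cases h : a = m <;> simp [h, natAdd_inj]
lemma fptL_single_cast (e : Fin p) :
    fptL p q (Pi.single (Fin.castAdd q e) 1) = 0 := by
  funext a
  simp [fptL_apply, fpt, Pi.single_apply, (castAdd_ne_natAdd e a).symm]

lemma bpt_add_single_nat (z : Fin (p+q) → ℝ) (m : Fin q) (t : ℝ) :
    bpt (z + t • (Pi.single (Fin.natAdd p m) 1 : Fin (p+q) → ℝ)) = bpt z := by
  funext a
  simp [bpt, Pi.single_apply, castAdd_ne_natAdd a m]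
lemma fpt_add_single_cast (z : Fin (p+q) → ℝ) (e : Fin p) (t : ℝ) :
    fpt (z + t • (Pi.single (Fin.castAdd q e) 1 : Fin (p+q) → ℝ)) = fpt z := by
  funext a
  simp [fpt, Pi.single_apply, (castAdd_ne_natAdd e a).symm]

lemma pd_comp_bpt (F : (Fin p → ℝ) → ℝ) (z : Fin (p+q) → ℝ) (e : Fin p)
    (hF : DifferentiableAt ℝ F (bpt z)) :
    pd (fun y => F (bpt y)) (Fin.castAdd q e) z = pd F e (bpt z) := by
  have h := pd_comp_clm F (bptL p q) z (Fin.castAdd q e) (by rwa [bptL_apply])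
  rw [show (fun y => F (bptL p q y)) = (fun y => F (bpt y)) from rfl] at h
  rw [h, bptL_single_cast, bptL_apply]
  rfl

lemma pd_comp_bpt_nat (F : (Fin p → ℝ) → ℝ) (z : Fin (p+q) → ℝ) (m : Fin q) :
    pd (fun y => F (bpt y)) (Fin.natAdd p m) z = 0 :=
  pd_const_line _ _ _ fun t => by rw [bpt_add_single_nat]

lemma pd_comp_fpt (F : (Fin q → ℝ) → ℝ) (z : Fin (p+q) → ℝ) (m : Fin q)
    (hF : DifferentiableAt ℝ F (fpt z)) :
    pd (fun y => F (fpt y)) (Fin.natAdd p m) z = pd F m (fpt z) := by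
  have h := pd_comp_clm F (fptL p q) z (Fin.natAdd p m) (by rwa [fptL_apply])
  rw [show (fun y => F (fptL p q y)) = (fun y => F (fpt y)) from rfl] at h
  rw [h, fptL_single_nat, fptL_apply]
  rfl

lemma pd_comp_fpt_cast (F : (Fin q → ℝ) → ℝ) (z : Fin (p+q) → ℝ) (e : Fin p) :
    pd (fun y => F (fpt y)) (Fin.castAdd q e) z = 0 :=
  pd_const_line _ _ _ fun t => by rw [fpt_add_single_cast]

/-! ### wPair component lemmas -/

lemma wPair_cc (A : (Fin p → ℝ) → Fin p → Fin p → ℝ) (B : (Fin q → ℝ) → Fin q → Fin q → ℝ)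
    (c : (Fin p → ℝ) → ℝ) (z : Fin (p+q) → ℝ) (a b : Fin p) :
    wPair A B c z (Fin.castAdd q a) (Fin.castAdd q b) = A (bpt z) a b := by
  simp [wPair, finSumFinEquiv_symm_apply_castAdd]
lemma wPair_cn (A : (Fin p → ℝ) → Fin p → Fin p → ℝ) (B : (Fin q → ℝ) → Fin q → Fin q → ℝ)
    (c : (Fin p → ℝ) → ℝ) (z : Fin (p+q) → ℝ) (a : Fin p) (m : Fin q) :
    wPair A B c z (Fin.castAdd q a) (Fin.natAdd p m) = 0 := by
  simp [wPair, finSumFinEquiv_symm_apply_castAdd, finSumFinEquiv_symm_apply_natAdd]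
lemma wPair_nc (A : (Fin p → ℝ) → Fin p → Fin p → ℝ) (B : (Fin q → ℝ) → Fin q → Fin q → ℝ)
    (c : (Fin p → ℝ) → ℝ) (z : Fin (p+q) → ℝ) (a : Fin p) (m : Fin q) :
    wPair A B c z (Fin.natAdd p m) (Fin.castAdd q a) = 0 := by
  simp [wPair, finSumFinEquiv_symm_apply_castAdd, finSumFinEquiv_symm_apply_natAdd]
lemma wPair_nn (A : (Fin p → ℝ) → Fin p → Fin p → ℝ) (B : (Fin q → ℝ) → Fin q → Fin q → ℝ)
    (c : (Fin p → ℝ) → ℝ) (z : Fin (p+q) → ℝ) (m l : Fin q) :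
    wPair A B c z (Fin.natAdd p m) (Fin.natAdd p l) = c (bpt z) * B (fpt z) m l := by
  simp [wPair, finSumFinEquiv_symm_apply_natAdd]

lemma isOpen_Mset {U : Set (Fin p → ℝ)} {V : Set (Fin q → ℝ)} (hU : IsOpen U) (hV : IsOpen V) :
    IsOpen (Mset U V) := by
  have : Mset U V = bpt ⁻¹' U ∩ fpt ⁻¹' V := rfl
  rw [this]
  exact ((hU.preimage (bptL p q).continuous).inter (hV.preimage (fptL p q).continuous))

/-! ### Smoothness infrastructure -/

lemma diffAt_of_contDiffOn {k : ℕ} {U : Set (Fin k → ℝ)} (hU : IsOpen U)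
    {F : (Fin k → ℝ) → ℝ} (hF : ContDiffOn ℝ (⊤:ℕ∞) F U) {x : Fin k → ℝ} (hx : x ∈ U) :
    DifferentiableAt ℝ F x :=
  (hF.contDiffAt (hU.mem_nhds hx)).differentiableAt (by simp)

lemma contDiffOn_pd {k : ℕ} {U : Set (Fin k → ℝ)} (hU : IsOpen U)
    {F : (Fin k → ℝ) → ℝ} (hF : ContDiffOn ℝ (⊤:ℕ∞) F U) (j : Fin k) :
    ContDiffOn ℝ (⊤:ℕ∞) (fun x => pd F j x) U := by
  have h1 : ContDiffOn ℝ (⊤:ℕ∞) (fderiv ℝ F) U := hF.fderiv_of_isOpen hU (by exact_mod_cast (le_refl (⊤:ℕ∞)) )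
  exact h1.clm_apply contDiffOn_const

lemma contDiffOn_finset_prod {k : ℕ} {ι : Type*} {U : Set (Fin k → ℝ)}
    {F : ι → (Fin k → ℝ) → ℝ} (s : Finset ι)
    (h : ∀ i ∈ s, ContDiffOn ℝ (⊤:ℕ∞) (F i) U) :
    ContDiffOn ℝ (⊤:ℕ∞) (fun x => ∏ i ∈ s, F i x) U := by
  classical
  induction s using Finset.induction with
  | empty => simpa using contDiffOn_const
  | insert a s hni ih =>
    simp only [Finset.prod_insert hni]
    exact (h a (Finset.mem_insert_self a s)).mul
      (ih fun i hi => h i (Finset.mem_insert_of_mem hi))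

lemma contDiffOn_det {k m : ℕ} {U : Set (Fin k → ℝ)}
    (E : (Fin k → ℝ) → Matrix (Fin m) (Fin m) ℝ)
    (hE : ∀ i j, ContDiffOn ℝ (⊤:ℕ∞) (fun x => E x i j) U) :
    ContDiffOn ℝ (⊤:ℕ∞) (fun x => (E x).det) U := by
  have hrw : (fun x => (E x).det)
      = fun x => ∑ σ : Equiv.Perm (Fin m), ((Equiv.Perm.sign σ : ℤ) : ℝ) * ∏ i, E x (σ i) i := by
    funext x; rw [Matrix.det_apply']
  rw [hrw]
  apply ContDiffOn.sum
  intro σ _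
  exact contDiffOn_const.mul (contDiffOn_finset_prod Finset.univ fun i _ => hE (σ i) i)

lemma inv_comm {m : ℕ} (M N : Fin m → Fin m → ℝ)
    (h : ∀ a b, (∑ c, M a c * N c b) = if a = b then (1:ℝ) else 0) :
    ∀ a b, (∑ c, N a c * M c b) = if a = b then (1:ℝ) else 0 := by
  have hMN : (Matrix.of M) * (Matrix.of N) = 1 := by
    ext i j
    simp only [Matrix.mul_apply, Matrix.of_apply, Matrix.one_apply]
    exact h i j
  have hNM := mul_eq_one_comm.mp hMN
  intro a b
  have := congrFun (congrFun hNM a) b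
  simp only [Matrix.mul_apply, Matrix.of_apply, Matrix.one_apply] at this
  rw [this]

lemma contDiffOn_inv_entries {k m : ℕ} {U : Set (Fin k → ℝ)}
    (A B : (Fin k → ℝ) → Fin m → Fin m → ℝ)
    (hA : ∀ a b, ContDiffOn ℝ (⊤:ℕ∞) (fun x => A x a b) U)
    (hAB : ∀ x ∈ U, ∀ a b, (∑ c, A x a c * B x c b) = if a = b then (1:ℝ) else 0) :
    ∀ a b, ContDiffOn ℝ (⊤:ℕ∞) (fun x => B x a b) U := by
  classical
  intro a b
  set M : (Fin k → ℝ) → Matrix (Fin m) (Fin m) ℝ := fun x => Matrix.of (A x) with hM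
  have hMN : ∀ x ∈ U, M x * Matrix.of (B x) = 1 := by
    intro x hx
    ext i j
    simp only [Matrix.mul_apply, Matrix.of_apply, Matrix.one_apply, hM]
    exact hAB x hx i j
  have hdet_ne : ∀ x ∈ U, (M x).det ≠ 0 := fun x hx =>
    (Matrix.isUnit_det_of_right_inverse (hMN x hx)).ne_zero
  have hdet : ContDiffOn ℝ (⊤:ℕ∞) (fun x => (M x).det) U :=
    contDiffOn_det M hA
  have hadj : ContDiffOn ℝ (⊤:ℕ∞) (fun x => (M x).adjugate a b) U := by
    have hrw : (fun x => (M x).adjugate a b)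
        = fun x => ((M x).updateRow b (Pi.single a 1)).det := by
      funext x; rw [Matrix.adjugate_apply]
    rw [hrw]
    apply contDiffOn_det
    intro i j
    by_cases hib : i = b
    · subst hib
      simp only [Matrix.updateRow_apply, if_pos rfl]
      exact contDiffOn_const
    · simp only [Matrix.updateRow_apply, if_neg hib]
      exact hA i j
  have hform : ∀ x ∈ U, B x a b = (M x).det⁻¹ * (M x).adjugate a b := by
    intro x hx
    have h1 : Matrix.of (B x) = (M x)⁻¹ := (Matrix.inv_eq_right_inv (hMN x hx)).symm
    have h2 : (M x)⁻¹ = Ring.inverse (M x).det • (M x).adjugate := Matrix.inv_def (M x)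
    have h3 := congrFun (congrFun (h1.trans h2) a) b
    simpa [Matrix.smul_apply, Ring.inverse_eq_inv'] using h3
  exact ((hdet.inv hdet_ne).mul hadj).congr hform

/-! ### Warped metric components -/

section Main

variable {U : Set (Fin p → ℝ)} {V : Set (Fin q → ℝ)}
  {gbar gbinv : (Fin p → ℝ) → Fin p → Fin p → ℝ}
  {gtil gtinv : (Fin q → ℝ) → Fin q → Fin q → ℝ}
  {f : (Fin p → ℝ) → ℝ}

lemma wMet_cc (z : Fin (p+q) → ℝ) (a b : Fin p) :
    wMet gbar gtil f z (Fin.castAdd q a) (Fin.castAdd q b) = gbar (bpt z) a b :=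
  wPair_cc _ _ _ _ _ _
lemma wMet_cn (z : Fin (p+q) → ℝ) (a : Fin p) (m : Fin q) :
    wMet gbar gtil f z (Fin.castAdd q a) (Fin.natAdd p m) = 0 :=
  wPair_cn _ _ _ _ _ _
lemma wMet_nc (z : Fin (p+q) → ℝ) (a : Fin p) (m : Fin q) :
    wMet gbar gtil f z (Fin.natAdd p m) (Fin.castAdd q a) = 0 :=
  wPair_nc _ _ _ _ _ _
lemma wMet_nn (z : Fin (p+q) → ℝ) (m l : Fin q) :
    wMet gbar gtil f z (Fin.natAdd p m) (Fin.natAdd p l) = f (bpt z) * gtil (fpt z) m l :=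
  wPair_nn _ _ _ _ _ _
lemma wMetInv_cc (z : Fin (p+q) → ℝ) (a b : Fin p) :
    wMetInv gbinv gtinv f z (Fin.castAdd q a) (Fin.castAdd q b) = gbinv (bpt z) a b :=
  wPair_cc _ _ _ _ _ _
lemma wMetInv_cn (z : Fin (p+q) → ℝ) (a : Fin p) (m : Fin q) :
    wMetInv gbinv gtinv f z (Fin.castAdd q a) (Fin.natAdd p m) = 0 :=
  wPair_cn _ _ _ _ _ _
lemma wMetInv_nc (z : Fin (p+q) → ℝ) (a : Fin p) (m : Fin q) :
    wMetInv gbinv gtinv f z (Fin.natAdd p m) (Fin.castAdd q a) = 0 :=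
  wPair_nc _ _ _ _ _ _
lemma wMetInv_nn (z : Fin (p+q) → ℝ) (m l : Fin q) :
    wMetInv gbinv gtinv f z (Fin.natAdd p m) (Fin.natAdd p l)
      = (f (bpt z))⁻¹ * gtinv (fpt z) m l :=
  wPair_nn _ _ _ _ _ _

lemma wMet_cc_fun (a b : Fin p) :
    (fun z => wMet gbar gtil f z (Fin.castAdd q a) (Fin.castAdd q b))
      = fun z => gbar (bpt z) a b := funext fun z => wMet_cc z a b
lemma wMet_cn_fun (a : Fin p) (m : Fin q) :
    (fun z => wMet gbar gtil f z (Fin.castAdd q a) (Fin.natAdd p m)) = fun _ => (0:ℝ) :=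
  funext fun z => wMet_cn z a m
lemma wMet_nc_fun (a : Fin p) (m : Fin q) :
    (fun z => wMet gbar gtil f z (Fin.natAdd p m) (Fin.castAdd q a)) = fun _ => (0:ℝ) :=
  funext fun z => wMet_nc z a m
lemma wMet_nn_fun (m l : Fin q) :
    (fun z => wMet gbar gtil f z (Fin.natAdd p m) (Fin.natAdd p l))
      = fun z => f (bpt z) * gtil (fpt z) m l := funext fun z => wMet_nn z m l

variable (hU : IsOpen U) (hV : IsOpen V)
  (hgb : ∀ a b, ContDiffOn ℝ (⊤:ℕ∞) (fun x => gbar x a b) U)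
  (hgbi : ∀ x ∈ U, ∀ a b, (∑ c, gbar x a c * gbinv x c b) = if a = b then (1:ℝ) else 0)
  (hgt : ∀ a b, ContDiffOn ℝ (⊤:ℕ∞) (fun y => gtil y a b) V)
  (hgts : ∀ y ∈ V, ∀ a b, gtil y a b = gtil y b a)
  (hgti : ∀ y ∈ V, ∀ a b, (∑ c, gtil y a c * gtinv y c b) = if a = b then (1:ℝ) else 0)
  (hf : ContDiffOn ℝ (⊤:ℕ∞) f U)
  (hfpos : ∀ x ∈ U, 0 < f x)

include hgb hgbi in
lemma sm_gbinv : ∀ a b, ContDiffOn ℝ (⊤:ℕ∞) (fun x => gbinv x a b) U :=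
  contDiffOn_inv_entries gbar gbinv hgb hgbi

include hU hgb hgbi in
lemma sm_chr (a b c : Fin p) :
    ContDiffOn ℝ (⊤:ℕ∞) (fun x => Christoffel gbar gbinv a b c x) U := by
  unfold Christoffel
  exact contDiffOn_const.mul (ContDiffOn.sum fun r _ =>
    (sm_gbinv hgb hgbi a r).mul
      (((contDiffOn_pd hU (hgb r c) b).add (contDiffOn_pd hU (hgb b r) c)).sub
        (contDiffOn_pd hU (hgb b c) r)))

include hU hgb hgbi in
lemma sm_riem (a b c d : Fin p) :
    ContDiffOn ℝ (⊤:ℕ∞) (fun x => Riem gbar gbinv x a b c d) U := by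
  unfold Riem
  exact ContDiffOn.sum fun r _ =>
    (hgb a r).mul
      ((((contDiffOn_pd hU (sm_chr hU hgb hgbi r d b) c).sub
          (contDiffOn_pd hU (sm_chr hU hgb hgbi r c b) d)).add
        (ContDiffOn.sum fun t _ =>
          (sm_chr hU hgb hgbi r c t).mul (sm_chr hU hgb hgbi t d b))).sub
        (ContDiffOn.sum fun t _ =>
          (sm_chr hU hgb hgbi r d t).mul (sm_chr hU hgb hgbi t c b)))

/-! ### Partial derivatives of the warped metric components -/

include hU hgb in
lemma pdg_cc_c {z : Fin (p+q) → ℝ} (hx : bpt z ∈ U) (a b e : Fin p) :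
    pd (fun y => wMet gbar gtil f y (Fin.castAdd q a) (Fin.castAdd q b)) (Fin.castAdd q e) z
      = pd (fun x => gbar x a b) e (bpt z) := by
  rw [wMet_cc_fun]
  exact pd_comp_bpt _ z e (diffAt_of_contDiffOn hU (hgb a b) hx)

lemma pdg_cc_n (z : Fin (p+q) → ℝ) (a b : Fin p) (m : Fin q) :
    pd (fun y => wMet gbar gtil f y (Fin.castAdd q a) (Fin.castAdd q b)) (Fin.natAdd p m) z
      = 0 := by
  rw [wMet_cc_fun]
  exact pd_comp_bpt_nat (fun x => gbar x a b) z m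

lemma pdg_cn (z : Fin (p+q) → ℝ) (a : Fin p) (m : Fin q) (j : Fin (p+q)) :
    pd (fun y => wMet gbar gtil f y (Fin.castAdd q a) (Fin.natAdd p m)) j z = 0 := by
  rw [wMet_cn_fun]
  exact pd_const 0 j z

lemma pdg_nc (z : Fin (p+q) → ℝ) (a : Fin p) (m : Fin q) (j : Fin (p+q)) :
    pd (fun y => wMet gbar gtil f y (Fin.natAdd p m) (Fin.castAdd q a)) j z = 0 := by
  rw [wMet_nc_fun]
  exact pd_const 0 j z

include hU hV hf hgt in
lemma pdg_nn_c {z : Fin (p+q) → ℝ} (hx : bpt z ∈ U) (hy : fpt z ∈ V) (m l : Fin q) (e : Fin p) :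
    pd (fun y => wMet gbar gtil f y (Fin.natAdd p m) (Fin.natAdd p l)) (Fin.castAdd q e) z
      = pd f e (bpt z) * gtil (fpt z) m l := by
  rw [wMet_nn_fun]
  have hF : DifferentiableAt ℝ (fun y : Fin (p+q) → ℝ => f (bpt y)) z :=
    (diffAt_of_contDiffOn hU hf hx).comp z (bptL p q).differentiableAt
  have hG : DifferentiableAt ℝ (fun y : Fin (p+q) → ℝ => gtil (fpt y) m l) z :=
    (diffAt_of_contDiffOn hV (hgt m l) hy).comp z (fptL p q).differentiableAt
  rw [pd_mul _ _ hF hG, pd_comp_bpt _ z e (diffAt_of_contDiffOn hU hf hx),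
    show pd (fun y => gtil (fpt y) m l) (Fin.castAdd q e) z = 0 from
      pd_comp_fpt_cast (fun x => gtil x m l) z e]
  ring

/-! ### Christoffel symbols of the warped metric -/

include hU hgb in
lemma chr_cc {z : Fin (p+q) → ℝ} (hx : bpt z ∈ U) (a b c : Fin p) :
    Christoffel (wMet gbar gtil f) (wMetInv gbinv gtinv f)
        (Fin.castAdd q a) (Fin.castAdd q b) (Fin.castAdd q c) z
      = Christoffel gbar gbinv a b c (bpt z) := by
  unfold Christoffel
  rw [Fin.sum_univ_add]
  simp only [wMetInv_cn, zero_mul, Finset.sum_const_zero, add_zero]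
  congr 1
  apply Finset.sum_congr rfl
  intro r _
  rw [wMetInv_cc, pdg_cc_c hU hgb hx r c b, pdg_cc_c hU hgb hx b r c,
    pdg_cc_c hU hgb hx b c r]

lemma chr_nc0 (z : Fin (p+q) → ℝ) (γ : Fin q) (b c : Fin p) :
    Christoffel (wMet gbar gtil f) (wMetInv gbinv gtinv f)
        (Fin.natAdd p γ) (Fin.castAdd q b) (Fin.castAdd q c) z = 0 := by
  unfold Christoffel
  rw [Fin.sum_univ_add]
  simp only [wMetInv_nc, zero_mul, Finset.sum_const_zero, zero_add]
  have h1 : ∀ ρ : Fin q,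
      wMetInv gbinv gtinv f z (Fin.natAdd p γ) (Fin.natAdd p ρ) *
        (pd (fun y => wMet gbar gtil f y (Fin.natAdd p ρ) (Fin.castAdd q c)) (Fin.castAdd q b) z
          + pd (fun y => wMet gbar gtil f y (Fin.castAdd q b) (Fin.natAdd p ρ)) (Fin.castAdd q c) z
          - pd (fun y => wMet gbar gtil f y (Fin.castAdd q b) (Fin.castAdd q c)) (Fin.natAdd p ρ) z)
        = 0 := by
    intro ρ
    rw [pdg_nc z c ρ, pdg_cn z b ρ, pdg_cc_n z b c ρ]
    ring
  rw [Finset.sum_congr rfl fun ρ _ => h1 ρ]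
  simp

lemma chr_cn0 (z : Fin (p+q) → ℝ) (a b : Fin p) (δ : Fin q) :
    Christoffel (wMet gbar gtil f) (wMetInv gbinv gtinv f)
        (Fin.natAdd p δ) (Fin.castAdd q a) (Fin.castAdd q b) z = 0 :=
  chr_nc0 z δ a b

include hU hV hf hgt hgts hgti hfpos in
lemma chr_nnc {z : Fin (p+q) → ℝ} (hx : bpt z ∈ U) (hy : fpt z ∈ V) (γ δ : Fin q) (c : Fin p) :
    Christoffel (wMet gbar gtil f) (wMetInv gbinv gtinv f)
        (Fin.natAdd p γ) (Fin.natAdd p δ) (Fin.castAdd q c) z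
      = pd f c (bpt z) / (2 * f (bpt z)) * (if γ = δ then 1 else 0) := by
  unfold Christoffel
  rw [Fin.sum_univ_add]
  simp only [wMetInv_nc, zero_mul, Finset.sum_const_zero, zero_add]
  have h1 : ∀ ρ : Fin q,
      wMetInv gbinv gtinv f z (Fin.natAdd p γ) (Fin.natAdd p ρ) *
        (pd (fun y => wMet gbar gtil f y (Fin.natAdd p ρ) (Fin.castAdd q c)) (Fin.natAdd p δ) z
          + pd (fun y => wMet gbar gtil f y (Fin.natAdd p δ) (Fin.natAdd p ρ)) (Fin.castAdd q c) z
          - pd (fun y => wMet gbar gtil f y (Fin.natAdd p δ) (Fin.castAdd q c)) (Fin.natAdd p ρ) z)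
        = ((f (bpt z))⁻¹ * pd f c (bpt z)) * (gtinv (fpt z) γ ρ * gtil (fpt z) ρ δ) := by
    intro ρ
    rw [wMetInv_nn, pdg_nc z c ρ (Fin.natAdd p δ), pdg_nn_c hU hV hgt hf hx hy δ ρ c,
      pdg_nc z c δ (Fin.natAdd p ρ), hgts (fpt z) hy δ ρ]
    ring
  rw [Finset.sum_congr rfl fun ρ _ => h1 ρ, ← Finset.mul_sum,
    inv_comm (gtil (fpt z)) (gtinv (fpt z)) (hgti (fpt z) hy) γ δ]
  have hne : f (bpt z) ≠ 0 := (hfpos _ hx).ne'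
  by_cases h : γ = δ <;> simp [h] <;> field_simp

include hU hV hf hgt hgti hfpos in
lemma chr_ncn {z : Fin (p+q) → ℝ} (hx : bpt z ∈ U) (hy : fpt z ∈ V) (γ δ : Fin q) (c : Fin p) :
    Christoffel (wMet gbar gtil f) (wMetInv gbinv gtinv f)
        (Fin.natAdd p γ) (Fin.castAdd q c) (Fin.natAdd p δ) z
      = pd f c (bpt z) / (2 * f (bpt z)) * (if γ = δ then 1 else 0) := by
  unfold Christoffel
  rw [Fin.sum_univ_add]
  simp only [wMetInv_nc, zero_mul, Finset.sum_const_zero, zero_add]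
  have h1 : ∀ ρ : Fin q,
      wMetInv gbinv gtinv f z (Fin.natAdd p γ) (Fin.natAdd p ρ) *
        (pd (fun y => wMet gbar gtil f y (Fin.natAdd p ρ) (Fin.natAdd p δ)) (Fin.castAdd q c) z
          + pd (fun y => wMet gbar gtil f y (Fin.castAdd q c) (Fin.natAdd p ρ)) (Fin.natAdd p δ) z
          - pd (fun y => wMet gbar gtil f y (Fin.castAdd q c) (Fin.natAdd p δ)) (Fin.natAdd p ρ) z)
        = ((f (bpt z))⁻¹ * pd f c (bpt z)) * (gtinv (fpt z) γ ρ * gtil (fpt z) ρ δ) := by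
    intro ρ
    rw [wMetInv_nn, pdg_nn_c hU hV hgt hf hx hy ρ δ c, pdg_cn z c ρ (Fin.natAdd p δ),
      pdg_cn z c δ (Fin.natAdd p ρ)]
    ring
  rw [Finset.sum_congr rfl fun ρ _ => h1 ρ, ← Finset.mul_sum,
    inv_comm (gtil (fpt z)) (gtinv (fpt z)) (hgti (fpt z) hy) γ δ]
  have hne : f (bpt z) ≠ 0 := (hfpos _ hx).ne'
  by_cases h : γ = δ <;> simp [h] <;> field_simp

include hU hV hgb hgbi in
lemma riem_base {z : Fin (p+q) → ℝ} (hz : z ∈ Mset U V) (a b c d : Fin p) :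
    Riem (wMet gbar gtil f) (wMetInv gbinv gtinv f) z
        (Fin.castAdd q a) (Fin.castAdd q b) (Fin.castAdd q c) (Fin.castAdd q d)
      = Riem gbar gbinv (bpt z) a b c d := by
  have hx : bpt z ∈ U := hz.1
  have hpdchr : ∀ r d' b' e : Fin p,
      pd (Christoffel (wMet gbar gtil f) (wMetInv gbinv gtinv f)
          (Fin.castAdd q r) (Fin.castAdd q d') (Fin.castAdd q b')) (Fin.castAdd q e) z
        = pd (fun x => Christoffel gbar gbinv r d' b' x) e (bpt z) := by
    intro r d' b' e
    rw [pd_congr_open (isOpen_Mset hU hV) (fun y' hy' => chr_cc hU hgb hy'.1 r d' b') hz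
      (Fin.castAdd q e)]
    exact pd_comp_bpt _ z e (diffAt_of_contDiffOn hU (sm_chr hU hgb hgbi r d' b') hx)
  have hGG : ∀ r s l j : Fin p,
      (∑ t : Fin (p+q), Christoffel (wMet gbar gtil f) (wMetInv gbinv gtinv f)
          (Fin.castAdd q r) (Fin.castAdd q s) t z *
        Christoffel (wMet gbar gtil f) (wMetInv gbinv gtinv f) t
          (Fin.castAdd q l) (Fin.castAdd q j) z)
        = ∑ t : Fin p, Christoffel gbar gbinv r s t (bpt z) *
            Christoffel gbar gbinv t l j (bpt z) := by
    intro r s l j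
    rw [Fin.sum_univ_add]
    simp only [chr_nc0, mul_zero, Finset.sum_const_zero, add_zero]
    apply Finset.sum_congr rfl
    intro t _
    rw [chr_cc hU hgb hx r s t, chr_cc hU hgb hx t l j]
  unfold Riem
  rw [Fin.sum_univ_add]
  simp only [wMet_cn, zero_mul, Finset.sum_const_zero, add_zero]
  apply Finset.sum_congr rfl
  intro r _
  rw [wMet_cc, hpdchr r d b c, hpdchr r c b d, hGG r c d b, hGG r d c b]

include hU hV hgb hgbi hgt hgts hgti hf hfpos in
lemma riem_mixed {z : Fin (p+q) → ℝ} (hz : z ∈ Mset U V) (γ δ : Fin q) (a b : Fin p) :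
    Riem (wMet gbar gtil f) (wMetInv gbinv gtinv f) z
        (Fin.natAdd p γ) (Fin.castAdd q a) (Fin.natAdd p δ) (Fin.castAdd q b)
      = f (bpt z) * gtil (fpt z) γ δ * Tten gbar gbinv f (bpt z) a b := by
  have hx : bpt z ∈ U := hz.1
  have hy : fpt z ∈ V := hz.2
  have hne : f (bpt z) ≠ 0 := (hfpos _ hx).ne'
  have hne2 : 2 * f (bpt z) ≠ 0 := mul_ne_zero two_ne_zero hne
  have d1 : DifferentiableAt ℝ (fun x' => pd f a x') (bpt z) :=
    diffAt_of_contDiffOn hU (contDiffOn_pd hU hf a) hx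
  have d2 : DifferentiableAt ℝ f (bpt z) := diffAt_of_contDiffOn hU hf hx
  have d2' : DifferentiableAt ℝ (fun x' => 2 * f x') (bpt z) :=
    (differentiableAt_const (2:ℝ)).mul d2
  have hne2' : ∀ {x'}, x' = bpt z → 2 * f x' ≠ 0 := fun h => h ▸ hne2
  have dq : DifferentiableAt ℝ (fun x' => pd f a x' / (2 * f x')) (bpt z) :=
    d1.mul (d2'.inv hne2)
  -- value of ∂_b (f_a / (2 f))
  have hp2' : pd (fun x' => pd f a x' / (2 * f x')) b (bpt z)
      = pd (fun x' => pd f a x') b (bpt z) * (2 * f (bpt z))⁻¹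
        + pd f a (bpt z) * (-(2 * pd f b (bpt z)) / (2 * f (bpt z)) ^ 2) := by
    simp only [div_eq_mul_inv]
    rw [pd_mul (G := fun x' => (2 * f x')⁻¹) _ _ d1 (d2'.inv hne2)]
    congr 2
    rw [pd_inv _ _ d2' hne2]
    congr 1
    have : (fun x' => 2 * f x') = fun x' => f x' * 2 := by funext x'; ring
    rw [this, pd_mul_const 2 b (bpt z) d2]
    unfold pd
    ring
  have hp1 : ∀ ε : Fin q,
      pd (Christoffel (wMet gbar gtil f) (wMetInv gbinv gtinv f)
        (Fin.natAdd p ε) (Fin.castAdd q b) (Fin.castAdd q a)) (Fin.natAdd p δ) z = 0 := by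
    intro ε
    have hc : (Christoffel (wMet gbar gtil f) (wMetInv gbinv gtinv f)
        (Fin.natAdd p ε) (Fin.castAdd q b) (Fin.castAdd q a)) = fun _ => (0:ℝ) :=
      funext fun w' => chr_nc0 w' ε b a
    rw [hc]
    exact pd_const 0 _ z
  have hp2 : ∀ ε : Fin q,
      pd (Christoffel (wMet gbar gtil f) (wMetInv gbinv gtinv f)
          (Fin.natAdd p ε) (Fin.natAdd p δ) (Fin.castAdd q a)) (Fin.castAdd q b) z
        = pd (fun x' => pd f a x' / (2 * f x')) b (bpt z) * (if ε = δ then 1 else 0) := by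
    intro ε
    rw [pd_congr_open (isOpen_Mset hU hV)
      (fun y' hy' => chr_nnc hU hV hgt hgts hgti hf hfpos hy'.1 hy'.2 ε δ a) hz
      (Fin.castAdd q b)]
    rw [pd_comp_bpt _ z b (dq.mul_const _)]
    exact pd_mul_const _ b (bpt z) dq
  have hp3 : ∀ ε : Fin q,
      (∑ t : Fin (p+q), Christoffel (wMet gbar gtil f) (wMetInv gbinv gtinv f)
          (Fin.natAdd p ε) (Fin.natAdd p δ) t z *
        Christoffel (wMet gbar gtil f) (wMetInv gbinv gtinv f) t
          (Fin.castAdd q b) (Fin.castAdd q a) z)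
        = (if ε = δ then 1 else 0) *
            ((∑ c', Christoffel gbar gbinv c' b a (bpt z) * pd f c' (bpt z)) / (2 * f (bpt z))) := by
    intro ε
    rw [Fin.sum_univ_add]
    simp only [chr_nc0, mul_zero, Finset.sum_const_zero, add_zero]
    rw [Finset.sum_div, Finset.mul_sum]
    apply Finset.sum_congr rfl
    intro c' _
    rw [chr_nnc hU hV hgt hgts hgti hf hfpos hx hy ε δ c', chr_cc hU hgb hx c' b a]
    ring
  have hp4 : ∀ ε : Fin q,
      (∑ t : Fin (p+q), Christoffel (wMet gbar gtil f) (wMetInv gbinv gtinv f)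
          (Fin.natAdd p ε) (Fin.castAdd q b) t z *
        Christoffel (wMet gbar gtil f) (wMetInv gbinv gtinv f) t
          (Fin.natAdd p δ) (Fin.castAdd q a) z)
        = (if ε = δ then 1 else 0) *
            (pd f b (bpt z) / (2 * f (bpt z)) * (pd f a (bpt z) / (2 * f (bpt z)))) := by
    intro ε
    rw [Fin.sum_univ_add]
    simp only [chr_nc0, zero_mul, Finset.sum_const_zero, zero_add]
    have hterm : ∀ ρ : Fin q,
        Christoffel (wMet gbar gtil f) (wMetInv gbinv gtinv f)
            (Fin.natAdd p ε) (Fin.castAdd q b) (Fin.natAdd p ρ) z *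
          Christoffel (wMet gbar gtil f) (wMetInv gbinv gtinv f)
            (Fin.natAdd p ρ) (Fin.natAdd p δ) (Fin.castAdd q a) z
        = (pd f b (bpt z) / (2 * f (bpt z)) * (pd f a (bpt z) / (2 * f (bpt z)))) *
            ((if ε = ρ then 1 else 0) * (if ρ = δ then 1 else 0)) := by
      intro ρ
      rw [chr_ncn hU hV hgt hgti hf hfpos hx hy ε ρ b,
        chr_nnc hU hV hgt hgts hgti hf hfpos hx hy ρ δ a]
      ring
    rw [Finset.sum_congr rfl fun ρ _ => hterm ρ, ← Finset.mul_sum]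
    have hsum : (∑ ρ : Fin q, (if ε = ρ then (1:ℝ) else 0) * (if ρ = δ then 1 else 0))
        = if ε = δ then 1 else 0 := by
      simp
    rw [hsum]
    ring
  unfold Riem
  rw [Fin.sum_univ_add]
  simp only [wMet_nc, zero_mul, Finset.sum_const_zero, zero_add]
  have hterm2 : ∀ ε : Fin q,
      wMet gbar gtil f z (Fin.natAdd p γ) (Fin.natAdd p ε) *
        (pd (Christoffel (wMet gbar gtil f) (wMetInv gbinv gtinv f)
            (Fin.natAdd p ε) (Fin.castAdd q b) (Fin.castAdd q a)) (Fin.natAdd p δ) z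
          - pd (Christoffel (wMet gbar gtil f) (wMetInv gbinv gtinv f)
              (Fin.natAdd p ε) (Fin.natAdd p δ) (Fin.castAdd q a)) (Fin.castAdd q b) z
          + (∑ t : Fin (p+q), Christoffel (wMet gbar gtil f) (wMetInv gbinv gtinv f)
              (Fin.natAdd p ε) (Fin.natAdd p δ) t z *
              Christoffel (wMet gbar gtil f) (wMetInv gbinv gtinv f) t
                (Fin.castAdd q b) (Fin.castAdd q a) z)
          - ∑ t : Fin (p+q), Christoffel (wMet gbar gtil f) (wMetInv gbinv gtinv f)
              (Fin.natAdd p ε) (Fin.castAdd q b) t z *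
              Christoffel (wMet gbar gtil f) (wMetInv gbinv gtinv f) t
                (Fin.natAdd p δ) (Fin.castAdd q a) z)
      = (f (bpt z) * gtil (fpt z) γ ε * Tten gbar gbinv f (bpt z) a b) *
          (if ε = δ then 1 else 0) := by
    intro ε
    rw [hp1 ε, hp2 ε, hp3 ε, hp4 ε, wMet_nn, hp2']
    unfold Tten
    by_cases h : ε = δ
    · simp only [h, if_pos rfl]
      field_simp
      ring
    · simp only [if_neg h]
      ring
  rw [Finset.sum_congr rfl fun ε _ => hterm2 ε]
  simp [Finset.sum_ite_eq]

include hU hV hgb hgbi hgt hgts hgti hf hfpos in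
lemma ric_base {z : Fin (p+q) → ℝ} (hz : z ∈ Mset U V) (a b : Fin p) :
    Ric (wMet gbar gtil f) (wMetInv gbinv gtinv f) z (Fin.castAdd q a) (Fin.castAdd q b)
      = Ric gbar gbinv (bpt z) a b + (q:ℝ) * Tten gbar gbinv f (bpt z) a b := by
  have hx : bpt z ∈ U := hz.1
  have hy : fpt z ∈ V := hz.2
  have hne : f (bpt z) ≠ 0 := (hfpos _ hx).ne'
  unfold Ric
  rw [Fin.sum_univ_add]
  have hbase : ∀ c' : Fin p,
      (∑ s : Fin (p+q), wMetInv gbinv gtinv f z (Fin.castAdd q c') s *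
          Riem (wMet gbar gtil f) (wMetInv gbinv gtinv f) z (Fin.castAdd q c')
            (Fin.castAdd q a) s (Fin.castAdd q b))
        = ∑ d' : Fin p, gbinv (bpt z) c' d' * Riem gbar gbinv (bpt z) c' a d' b := by
    intro c'
    rw [Fin.sum_univ_add]
    simp only [wMetInv_cn, zero_mul, Finset.sum_const_zero, add_zero]
    refine Finset.sum_congr rfl fun d' _ => ?_
    rw [wMetInv_cc, riem_base hU hV hgb hgbi hz c' a d' b]
  have hfib : ∀ γ : Fin q,
      (∑ s : Fin (p+q), wMetInv gbinv gtinv f z (Fin.natAdd p γ) s *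
          Riem (wMet gbar gtil f) (wMetInv gbinv gtinv f) z (Fin.natAdd p γ)
            (Fin.castAdd q a) s (Fin.castAdd q b))
        = ∑ δ : Fin q, (gtinv (fpt z) γ δ * gtil (fpt z) γ δ) *
            Tten gbar gbinv f (bpt z) a b := by
    intro γ
    rw [Fin.sum_univ_add]
    simp only [wMetInv_nc, zero_mul, Finset.sum_const_zero, zero_add]
    refine Finset.sum_congr rfl fun δ _ => ?_
    rw [wMetInv_nn, riem_mixed hU hV hgb hgbi hgt hgts hgti hf hfpos hz γ δ a b]
    field_simp
  rw [Finset.sum_congr rfl fun c' _ => hbase c', Finset.sum_congr rfl fun γ _ => hfib γ]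
  have h1 : ∀ γ : Fin q,
      (∑ δ : Fin q, (gtinv (fpt z) γ δ * gtil (fpt z) γ δ) * Tten gbar gbinv f (bpt z) a b)
        = Tten gbar gbinv f (bpt z) a b := by
    intro γ
    rw [← Finset.sum_mul]
    have h2 : (∑ δ : Fin q, gtinv (fpt z) γ δ * gtil (fpt z) γ δ) = 1 := by
      have h3 : ∀ δ : Fin q, gtinv (fpt z) γ δ * gtil (fpt z) γ δ
          = gtinv (fpt z) γ δ * gtil (fpt z) δ γ := fun δ => by
        rw [hgts (fpt z) hy γ δ]
      rw [Finset.sum_congr rfl fun δ _ => h3 δ,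
        inv_comm (gtil (fpt z)) (gtinv (fpt z)) (hgti (fpt z) hy) γ γ]
      simp
    rw [h2, one_mul]
  rw [Finset.sum_congr rfl fun γ _ => h1 γ, Finset.sum_const, Finset.card_univ,
    Fintype.card_fin]
  simp [nsmul_eq_mul]

include hU hV hgb hgbi in
lemma cov4_base {z : Fin (p+q) → ℝ} (hz : z ∈ Mset U V) (a b c d e : Fin p) :
    cov4 (wMet gbar gtil f) (wMetInv gbinv gtinv f)
        (Riem (wMet gbar gtil f) (wMetInv gbinv gtinv f)) z
        (Fin.castAdd q a) (Fin.castAdd q b) (Fin.castAdd q c) (Fin.castAdd q d) (Fin.castAdd q e)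
      = cov4 gbar gbinv (Riem gbar gbinv) (bpt z) a b c d e := by
  have hx : bpt z ∈ U := hz.1
  unfold cov4
  have hpd : pd (fun y => Riem (wMet gbar gtil f) (wMetInv gbinv gtinv f) y
        (Fin.castAdd q a) (Fin.castAdd q b) (Fin.castAdd q c) (Fin.castAdd q d))
        (Fin.castAdd q e) z
      = pd (fun x => Riem gbar gbinv x a b c d) e (bpt z) := by
    rw [pd_congr_open (isOpen_Mset hU hV)
      (fun y' hy' => riem_base hU hV hgb hgbi hy' a b c d) hz (Fin.castAdd q e)]
    exact pd_comp_bpt _ z e (diffAt_of_contDiffOn hU (sm_riem hU hgb hgbi a b c d) hx)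
  have h1 : (∑ r : Fin (p+q), Christoffel (wMet gbar gtil f) (wMetInv gbinv gtinv f) r
        (Fin.castAdd q e) (Fin.castAdd q a) z *
        Riem (wMet gbar gtil f) (wMetInv gbinv gtinv f) z r
          (Fin.castAdd q b) (Fin.castAdd q c) (Fin.castAdd q d))
      = ∑ r : Fin p, Christoffel gbar gbinv r e a (bpt z) *
          Riem gbar gbinv (bpt z) r b c d := by
    rw [Fin.sum_univ_add]
    simp only [chr_nc0, zero_mul, Finset.sum_const_zero, add_zero]
    refine Finset.sum_congr rfl fun r _ => ?_
    rw [chr_cc hU hgb hx r e a, riem_base hU hV hgb hgbi hz r b c d]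
  have h2 : (∑ r : Fin (p+q), Christoffel (wMet gbar gtil f) (wMetInv gbinv gtinv f) r
        (Fin.castAdd q e) (Fin.castAdd q b) z *
        Riem (wMet gbar gtil f) (wMetInv gbinv gtinv f) z (Fin.castAdd q a) r
          (Fin.castAdd q c) (Fin.castAdd q d))
      = ∑ r : Fin p, Christoffel gbar gbinv r e b (bpt z) *
          Riem gbar gbinv (bpt z) a r c d := by
    rw [Fin.sum_univ_add]
    simp only [chr_nc0, zero_mul, Finset.sum_const_zero, add_zero]
    refine Finset.sum_congr rfl fun r _ => ?_
    rw [chr_cc hU hgb hx r e b, riem_base hU hV hgb hgbi hz a r c d]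
  have h3 : (∑ r : Fin (p+q), Christoffel (wMet gbar gtil f) (wMetInv gbinv gtinv f) r
        (Fin.castAdd q e) (Fin.castAdd q c) z *
        Riem (wMet gbar gtil f) (wMetInv gbinv gtinv f) z (Fin.castAdd q a)
          (Fin.castAdd q b) r (Fin.castAdd q d))
      = ∑ r : Fin p, Christoffel gbar gbinv r e c (bpt z) *
          Riem gbar gbinv (bpt z) a b r d := by
    rw [Fin.sum_univ_add]
    simp only [chr_nc0, zero_mul, Finset.sum_const_zero, add_zero]
    refine Finset.sum_congr rfl fun r _ => ?_
    rw [chr_cc hU hgb hx r e c, riem_base hU hV hgb hgbi hz a b r d]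
  have h4 : (∑ r : Fin (p+q), Christoffel (wMet gbar gtil f) (wMetInv gbinv gtinv f) r
        (Fin.castAdd q e) (Fin.castAdd q d) z *
        Riem (wMet gbar gtil f) (wMetInv gbinv gtinv f) z (Fin.castAdd q a)
          (Fin.castAdd q b) (Fin.castAdd q c) r)
      = ∑ r : Fin p, Christoffel gbar gbinv r e d (bpt z) *
          Riem gbar gbinv (bpt z) a b c r := by
    rw [Fin.sum_univ_add]
    simp only [chr_nc0, zero_mul, Finset.sum_const_zero, add_zero]
    refine Finset.sum_congr rfl fun r _ => ?_
    rw [chr_cc hU hgb hx r e d, riem_base hU hV hgb hgbi hz a b c r]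
  rw [hpd, h1, h2, h3, h4]

end Main

end WarpAux

/-- Corollary 4.1(i): if T is a linear combination of the Ricci tensor and metric of the base,
then the base of a warped product SGK manifold is itself SGK. -/
theorem base_of_warped_SGK_is_SGK
    {p q : ℕ} (hp : 1 ≤ p) (hq : 1 ≤ q)
    (U : Set (Fin p → ℝ)) (V : Set (Fin q → ℝ))
    (hU : IsOpen U) (hV : IsOpen V)
    (gbar gbinv : (Fin p → ℝ) → Fin p → Fin p → ℝ)
    (gtil gtinv : (Fin q → ℝ) → Fin q → Fin q → ℝ)
    (f : (Fin p → ℝ) → ℝ)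
    (hgb : ∀ a b, ContDiffOn ℝ (⊤ : ℕ∞) (fun x => gbar x a b) U)
    (hgbs : ∀ x ∈ U, ∀ a b, gbar x a b = gbar x b a)
    (hgbi : ∀ x ∈ U, ∀ a b, (∑ c, gbar x a c * gbinv x c b) = if a = b then (1 : ℝ) else 0)
    (hgt : ∀ a b, ContDiffOn ℝ (⊤ : ℕ∞) (fun y => gtil y a b) V)
    (hgts : ∀ y ∈ V, ∀ a b, gtil y a b = gtil y b a)
    (hgti : ∀ y ∈ V, ∀ a b, (∑ c, gtil y a c * gtinv y c b) = if a = b then (1 : ℝ) else 0)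
    (hf : ContDiffOn ℝ (⊤ : ℕ∞) f U)
    (hfpos : ∀ x ∈ U, 0 < f x)
    (piF phiF psiF thetaF : (Fin (p + q) → ℝ) → Fin (p + q) → ℝ)
    (hpiF : ∀ m, ContDiffOn ℝ (⊤ : ℕ∞) (fun z => piF z m) (Mset U V))
    (hphiF : ∀ m, ContDiffOn ℝ (⊤ : ℕ∞) (fun z => phiF z m) (Mset U V))
    (hpsiF : ∀ m, ContDiffOn ℝ (⊤ : ℕ∞) (fun z => psiF z m) (Mset U V))
    (hthetaF : ∀ m, ContDiffOn ℝ (⊤ : ℕ∞) (fun z => thetaF z m) (Mset U V))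
    (hsgk : ∀ z ∈ Mset U V, SGK (wMet gbar gtil f) (wMetInv gbinv gtinv f) piF phiF psiF thetaF z)
    (lam mu : (Fin p → ℝ) → ℝ)
    (hlam : ContDiffOn ℝ (⊤ : ℕ∞) lam U) (hmu : ContDiffOn ℝ (⊤ : ℕ∞) mu U)
    (hT : ∀ x ∈ U, ∀ a b, Tten gbar gbinv f x a b = lam x * Ric gbar gbinv x a b + mu x * gbar x a b) :
    ∃ piB phiB psiB thetaB : (Fin (p + q) → ℝ) → Fin p → ℝ,
      ∀ z ∈ Mset U V, ∀ a b c d e : Fin p,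
        cov4 gbar gbinv (Riem gbar gbinv) (bpt z) a b c d e =
          piB z e * Riem gbar gbinv (bpt z) a b c d
          + phiB z e * KN (Ric gbar gbinv) (Ric gbar gbinv) (bpt z) a b c d
          + psiB z e * KN gbar (Ric gbar gbinv) (bpt z) a b c d
          + thetaB z e * KN gbar gbar (bpt z) a b c d := by
  classical
  refine ⟨fun z e => piF z (Fin.castAdd q e),
    fun z e => phiF z (Fin.castAdd q e) * (1 + (q:ℝ) * lam (bpt z)) ^ 2,
    fun z e => 2 * phiF z (Fin.castAdd q e) * (1 + (q:ℝ) * lam (bpt z)) * ((q:ℝ) * mu (bpt z))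
      + psiF z (Fin.castAdd q e) * (1 + (q:ℝ) * lam (bpt z)),
    fun z e => phiF z (Fin.castAdd q e) * ((q:ℝ) * mu (bpt z)) ^ 2
      + psiF z (Fin.castAdd q e) * ((q:ℝ) * mu (bpt z)) + thetaF z (Fin.castAdd q e),
    ?_⟩
  intro z hz a b c d e
  have hx : bpt z ∈ U := hz.1
  have hs := hsgk z hz (Fin.castAdd q a) (Fin.castAdd q b) (Fin.castAdd q c)
    (Fin.castAdd q d) (Fin.castAdd q e)
  rw [WarpAux.cov4_base hU hV hgb hgbi hz a b c d e,
    WarpAux.riem_base hU hV hgb hgbi hz a b c d] at hs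
  have hric : ∀ i j : Fin p,
      Ric (wMet gbar gtil f) (wMetInv gbinv gtinv f) z (Fin.castAdd q i) (Fin.castAdd q j)
        = (1 + (q:ℝ) * lam (bpt z)) * Ric gbar gbinv (bpt z) i j
          + ((q:ℝ) * mu (bpt z)) * gbar (bpt z) i j := by
    intro i j
    rw [WarpAux.ric_base hU hV hgb hgbi hgt hgts hgti hf hfpos hz i j, hT (bpt z) hx i j]
    ring
  simp only [KN, hric, WarpAux.wMet_cc] at hs ⊢
  rw [hs]
  ring
end
end

section
/- Let M = U ×_f V be a warped product whose metric g is super generalized recurrent (SGK_n) with associated 1-forms (Π, Φ, Ψ, Θ). Then at every point x ∈ M at which the fiber part of Π is nonzero (i.e. Π_ε(x) ≠ 0 for some ε ∈ {p+1,…,n}), the base metric ḡ is of generalized Roter type GRT_p with (R̄; ḡ, S̄, T): there exist real numbers L₁,…,L₆ such that R̄_{abcd} = L₁ (ḡ∧ḡ)_{abcd} − L₂ (ḡ∧S̄)_{abcd} − L₃ (S̄∧S̄)_{abcd} − L₄ (ḡ∧T)_{abcd} − L₅ (S̄∧T)_{abcd} − L₆ (T∧T)_{abcd} at x for all indices a,b,c,d.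 -/
noncomputable section

section Toolkit

open ContinuousLinearMap in
/-- base projection as a continuous linear map -/
def bptCLM (p q : ℕ) : (Fin (p + q) → ℝ) →L[ℝ] (Fin p → ℝ) :=
  ContinuousLinearMap.pi (fun a => ContinuousLinearMap.proj (Fin.castAdd q a))

def fptCLM (p q : ℕ) : (Fin (p + q) → ℝ) →L[ℝ] (Fin q → ℝ) :=
  ContinuousLinearMap.pi (fun a => ContinuousLinearMap.proj (Fin.natAdd p a))

def extbCLM (p q : ℕ) : (Fin p → ℝ) →L[ℝ] (Fin (p + q) → ℝ) :=
  ContinuousLinearMap.pi (fun i =>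
    Sum.elim (fun a => ContinuousLinearMap.proj a) (fun _ => 0) (finSumFinEquiv.symm i))

def extfCLM (p q : ℕ) : (Fin q → ℝ) →L[ℝ] (Fin (p + q) → ℝ) :=
  ContinuousLinearMap.pi (fun i =>
    Sum.elim (fun _ => 0) (fun a => ContinuousLinearMap.proj a) (finSumFinEquiv.symm i))

variable {p q : ℕ}

lemma bptCLM_apply (z : Fin (p + q) → ℝ) : bptCLM p q z = bpt z := rfl

lemma fptCLM_apply (z : Fin (p + q) → ℝ) : fptCLM p q z = fpt z := rfl

lemma bpt_extb (x : Fin p → ℝ) : bpt (extbCLM p q x) = x := by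
  funext a
  simp [bpt, extbCLM, ContinuousLinearMap.pi_apply, finSumFinEquiv_symm_apply_castAdd]

lemma fpt_extf (x : Fin q → ℝ) : fpt (extfCLM p q x) = x := by
  funext a
  simp [fpt, extfCLM, ContinuousLinearMap.pi_apply, finSumFinEquiv_symm_apply_natAdd]

lemma fpt_extb (x : Fin p → ℝ) : fpt (extbCLM p q x) = 0 := by
  funext a
  simp [fpt, extbCLM, ContinuousLinearMap.pi_apply, finSumFinEquiv_symm_apply_natAdd]

lemma bpt_extf (x : Fin q → ℝ) : bpt (extfCLM p q x) = 0 := by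
  funext a
  simp [bpt, extfCLM, ContinuousLinearMap.pi_apply, finSumFinEquiv_symm_apply_castAdd]

lemma castAdd_ne_natAdd (a : Fin p) (b : Fin q) : Fin.castAdd q a ≠ Fin.natAdd p b := by
  intro h
  have := congrArg Fin.val h
  simp [Fin.castAdd, Fin.natAdd] at this
  omega


lemma bpt_add (u v : Fin (p + q) → ℝ) : bpt (u + v) = bpt u + bpt v := rfl

lemma bpt_sub (u v : Fin (p + q) → ℝ) : bpt (u - v) = bpt u - bpt v := rfl

lemma fpt_add (u v : Fin (p + q) → ℝ) : fpt (u + v) = fpt u + fpt v := rfl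

lemma fpt_sub (u v : Fin (p + q) → ℝ) : fpt (u - v) = fpt u - fpt v := rfl

lemma bpt_single_cast (c : Fin p) :
    bpt (Pi.single (Fin.castAdd q c) (1 : ℝ)) = Pi.single c 1 := by
  funext a
  simp only [bpt, Pi.single_apply, Fin.castAdd_inj]

lemma bpt_single_nat (δ : Fin q) :
    bpt (Pi.single (Fin.natAdd p δ) (1 : ℝ)) = 0 := by
  funext a
  simp only [bpt, Pi.single_apply, Pi.zero_apply]
  simp [castAdd_ne_natAdd a δ]

lemma natAdd_inj' (a b : Fin q) : Fin.natAdd p a = Fin.natAdd p b ↔ a = b := by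
  constructor
  · intro h; have := congrArg Fin.val h; simp [Fin.natAdd] at this; exact Fin.ext this
  · intro h; rw [h]

lemma fpt_single_nat (δ : Fin q) :
    fpt (Pi.single (Fin.natAdd p δ) (1 : ℝ)) = Pi.single δ 1 := by
  funext a
  simp only [fpt, Pi.single_apply, natAdd_inj']

lemma fpt_single_cast (c : Fin p) :
    fpt (Pi.single (Fin.castAdd q c) (1 : ℝ)) = 0 := by
  funext a
  simp only [fpt, Pi.single_apply, Pi.zero_apply]
  simp [(castAdd_ne_natAdd c a).symm]

lemma diff_comp_bpt_iff (G : (Fin p → ℝ) → ℝ) (z : Fin (p + q) → ℝ) :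
    DifferentiableAt ℝ (fun y => G (bpt y)) z ↔ DifferentiableAt ℝ G (bpt z) := by
  constructor
  · intro h
    have hι : DifferentiableAt ℝ
        (fun x : Fin p → ℝ => extbCLM p q x + (z - extbCLM p q (bpt z))) (bpt z) :=
      ((extbCLM p q).differentiableAt).add_const _
    have hcomp : DifferentiableAt ℝ
        ((fun y => G (bpt y)) ∘ (fun x : Fin p → ℝ => extbCLM p q x + (z - extbCLM p q (bpt z))))
        (bpt z) := by
      apply DifferentiableAt.comp
      · show DifferentiableAt ℝ (fun y => G (bpt y))
          (extbCLM p q (bpt z) + (z - extbCLM p q (bpt z)))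
        have : extbCLM p q (bpt z) + (z - extbCLM p q (bpt z)) = z := by abel
        rw [this]; exact h
      · exact hι
    have hG : G = ((fun y => G (bpt y)) ∘
        (fun x : Fin p → ℝ => extbCLM p q x + (z - extbCLM p q (bpt z)))) := by
      funext x
      simp only [Function.comp_apply]
      congr 1
      rw [bpt_add, bpt_sub, bpt_extb, bpt_extb]
      abel
    rw [hG]; exact hcomp
  · intro h
    have : (fun y => G (bpt y)) = G ∘ (bptCLM p q) := rfl
    rw [this]
    exact h.comp z (bptCLM p q).differentiableAt

lemma diff_comp_fpt_iff (G : (Fin q → ℝ) → ℝ) (z : Fin (p + q) → ℝ) :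
    DifferentiableAt ℝ (fun y => G (fpt y)) z ↔ DifferentiableAt ℝ G (fpt z) := by
  constructor
  · intro h
    have hι : DifferentiableAt ℝ
        (fun x : Fin q → ℝ => extfCLM p q x + (z - extfCLM p q (fpt z))) (fpt z) :=
      ((extfCLM p q).differentiableAt).add_const _
    have hcomp : DifferentiableAt ℝ
        ((fun y => G (fpt y)) ∘ (fun x : Fin q → ℝ => extfCLM p q x + (z - extfCLM p q (fpt z))))
        (fpt z) := by
      apply DifferentiableAt.comp
      · show DifferentiableAt ℝ (fun y => G (fpt y))
          (extfCLM p q (fpt z) + (z - extfCLM p q (fpt z)))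
        have : extfCLM p q (fpt z) + (z - extfCLM p q (fpt z)) = z := by abel
        rw [this]; exact h
      · exact hι
    have hG : G = ((fun y => G (fpt y)) ∘
        (fun x : Fin q → ℝ => extfCLM p q x + (z - extfCLM p q (fpt z)))) := by
      funext x
      simp only [Function.comp_apply]
      congr 1
      rw [fpt_add, fpt_sub, fpt_extf, fpt_extf]
      abel
    rw [hG]; exact hcomp
  · intro h
    have : (fun y => G (fpt y)) = G ∘ (fptCLM p q) := rfl
    rw [this]
    exact h.comp z (fptCLM p q).differentiableAt

lemma pd_comp_bpt_cast (G : (Fin p → ℝ) → ℝ) (z : Fin (p + q) → ℝ) (c : Fin p) :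
    pd (fun y => G (bpt y)) (Fin.castAdd q c) z = pd G c (bpt z) := by
  by_cases h : DifferentiableAt ℝ G (bpt z)
  · unfold pd
    have hb : (fun y => G (bpt y)) = G ∘ (bptCLM p q) := rfl
    rw [hb, fderiv_comp z (by rw [bptCLM_apply]; exact h) (bptCLM p q).differentiableAt]
    rw [ContinuousLinearMap.fderiv]
    simp only [ContinuousLinearMap.coe_comp', Function.comp_apply, bptCLM_apply]
    rw [bpt_single_cast]
  · have h2 : ¬ DifferentiableAt ℝ (fun y => G (bpt y)) z :=
      fun hc => h ((diff_comp_bpt_iff G z).mp hc)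
    unfold pd
    rw [fderiv_zero_of_not_differentiableAt h, fderiv_zero_of_not_differentiableAt h2]
    simp

lemma pd_comp_bpt_nat (G : (Fin p → ℝ) → ℝ) (z : Fin (p + q) → ℝ) (δ : Fin q) :
    pd (fun y => G (bpt y)) (Fin.natAdd p δ) z = 0 := by
  by_cases h : DifferentiableAt ℝ G (bpt z)
  · unfold pd
    have hb : (fun y => G (bpt y)) = G ∘ (bptCLM p q) := rfl
    rw [hb, fderiv_comp z (by rw [bptCLM_apply]; exact h) (bptCLM p q).differentiableAt]
    rw [ContinuousLinearMap.fderiv]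
    simp only [ContinuousLinearMap.coe_comp', Function.comp_apply]
    rw [show (bptCLM p q) (Pi.single (Fin.natAdd p δ) (1:ℝ)) = 0 from bpt_single_nat δ]
    simp
  · have h2 : ¬ DifferentiableAt ℝ (fun y => G (bpt y)) z :=
      fun hc => h ((diff_comp_bpt_iff G z).mp hc)
    unfold pd
    rw [fderiv_zero_of_not_differentiableAt h2]
    simp

lemma pd_comp_fpt_nat (G : (Fin q → ℝ) → ℝ) (z : Fin (p + q) → ℝ) (δ : Fin q) :
    pd (fun y => G (fpt y)) (Fin.natAdd p δ) z = pd G δ (fpt z) := by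
  by_cases h : DifferentiableAt ℝ G (fpt z)
  · unfold pd
    have hb : (fun y => G (fpt y)) = G ∘ (fptCLM p q) := rfl
    rw [hb, fderiv_comp z (by rw [fptCLM_apply]; exact h) (fptCLM p q).differentiableAt]
    rw [ContinuousLinearMap.fderiv]
    simp only [ContinuousLinearMap.coe_comp', Function.comp_apply, fptCLM_apply]
    rw [fpt_single_nat]
  · have h2 : ¬ DifferentiableAt ℝ (fun y => G (fpt y)) z :=
      fun hc => h ((diff_comp_fpt_iff G z).mp hc)
    unfold pd
    rw [fderiv_zero_of_not_differentiableAt h, fderiv_zero_of_not_differentiableAt h2]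
    simp

lemma pd_comp_fpt_cast (G : (Fin q → ℝ) → ℝ) (z : Fin (p + q) → ℝ) (c : Fin p) :
    pd (fun y => G (fpt y)) (Fin.castAdd q c) z = 0 := by
  by_cases h : DifferentiableAt ℝ G (fpt z)
  · unfold pd
    have hb : (fun y => G (fpt y)) = G ∘ (fptCLM p q) := rfl
    rw [hb, fderiv_comp z (by rw [fptCLM_apply]; exact h) (fptCLM p q).differentiableAt]
    rw [ContinuousLinearMap.fderiv]
    simp only [ContinuousLinearMap.coe_comp', Function.comp_apply]
    rw [show (fptCLM p q) (Pi.single (Fin.castAdd q c) (1:ℝ)) = 0 from fpt_single_cast c]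
    simp
  · have h2 : ¬ DifferentiableAt ℝ (fun y => G (fpt y)) z :=
      fun hc => h ((diff_comp_fpt_iff G z).mp hc)
    unfold pd
    rw [fderiv_zero_of_not_differentiableAt h2]
    simp

lemma pd_congr {k : ℕ} {F G : (Fin k → ℝ) → ℝ} {x : Fin k → ℝ} (h : F =ᶠ[nhds x] G)
    (j : Fin k) : pd F j x = pd G j x := by
  unfold pd; rw [h.fderiv_eq]

lemma pd_const {k : ℕ} (c : ℝ) (j : Fin k) (x : Fin k → ℝ) : pd (fun _ => c) j x = 0 := by
  unfold pd; simp

lemma pd_mul {k : ℕ} {u v : (Fin k → ℝ) → ℝ} {x : Fin k → ℝ}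
    (hu : DifferentiableAt ℝ u x) (hv : DifferentiableAt ℝ v x) (j : Fin k) :
    pd (fun y => u y * v y) j x = pd u j x * v x + u x * pd v j x := by
  unfold pd
  rw [fderiv_fun_mul hu hv]
  simp only [ContinuousLinearMap.add_apply, ContinuousLinearMap.smul_apply, smul_eq_mul]
  ring

lemma pd_inv {k : ℕ} {v : (Fin k → ℝ) → ℝ} {x : Fin k → ℝ}
    (hv : DifferentiableAt ℝ v x) (h0 : v x ≠ 0) (j : Fin k) :
    pd (fun y => (v y)⁻¹) j x = -(pd v j x) / (v x) ^ 2 := by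
  have h := (hasDerivAt_inv h0).comp_hasFDerivAt x hv.hasFDerivAt
  unfold pd
  rw [show (fun y => (v y)⁻¹) = (fun y : ℝ => y⁻¹) ∘ v from rfl, h.fderiv]
  simp only [ContinuousLinearMap.smul_apply, smul_eq_mul]
  ring

end Toolkit
section Components

variable {p q : ℕ}
variable (gbar gbinv : (Fin p → ℝ) → Fin p → Fin p → ℝ)
variable (gtil gtinv : (Fin q → ℝ) → Fin q → Fin q → ℝ)
variable (f : (Fin p → ℝ) → ℝ)

lemma wMet_bb (z : Fin (p + q) → ℝ) (a b : Fin p) :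
    wMet gbar gtil f z (Fin.castAdd q a) (Fin.castAdd q b) = gbar (bpt z) a b := by
  simp [wMet, wPair, finSumFinEquiv_symm_apply_castAdd]

lemma wMet_bf (z : Fin (p + q) → ℝ) (a : Fin p) (β : Fin q) :
    wMet gbar gtil f z (Fin.castAdd q a) (Fin.natAdd p β) = 0 := by
  simp [wMet, wPair, finSumFinEquiv_symm_apply_castAdd, finSumFinEquiv_symm_apply_natAdd]

lemma wMet_fb (z : Fin (p + q) → ℝ) (α : Fin q) (b : Fin p) :
    wMet gbar gtil f z (Fin.natAdd p α) (Fin.castAdd q b) = 0 := by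
  simp [wMet, wPair, finSumFinEquiv_symm_apply_castAdd, finSumFinEquiv_symm_apply_natAdd]

lemma wMet_ff (z : Fin (p + q) → ℝ) (α β : Fin q) :
    wMet gbar gtil f z (Fin.natAdd p α) (Fin.natAdd p β) = f (bpt z) * gtil (fpt z) α β := by
  simp [wMet, wPair, finSumFinEquiv_symm_apply_natAdd]

lemma wMetInv_bb (z : Fin (p + q) → ℝ) (a b : Fin p) :
    wMetInv gbinv gtinv f z (Fin.castAdd q a) (Fin.castAdd q b) = gbinv (bpt z) a b := by
  simp [wMetInv, wPair, finSumFinEquiv_symm_apply_castAdd]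

lemma wMetInv_bf (z : Fin (p + q) → ℝ) (a : Fin p) (β : Fin q) :
    wMetInv gbinv gtinv f z (Fin.castAdd q a) (Fin.natAdd p β) = 0 := by
  simp [wMetInv, wPair, finSumFinEquiv_symm_apply_castAdd, finSumFinEquiv_symm_apply_natAdd]

lemma wMetInv_fb (z : Fin (p + q) → ℝ) (α : Fin q) (b : Fin p) :
    wMetInv gbinv gtinv f z (Fin.natAdd p α) (Fin.castAdd q b) = 0 := by
  simp [wMetInv, wPair, finSumFinEquiv_symm_apply_castAdd, finSumFinEquiv_symm_apply_natAdd]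

lemma wMetInv_ff (z : Fin (p + q) → ℝ) (α β : Fin q) :
    wMetInv gbinv gtinv f z (Fin.natAdd p α) (Fin.natAdd p β)
      = (f (bpt z))⁻¹ * gtinv (fpt z) α β := by
  simp [wMetInv, wPair, finSumFinEquiv_symm_apply_natAdd]

/-! pd of components -/

lemma pd_wMet_bb_b (z : Fin (p + q) → ℝ) (a b c : Fin p) :
    pd (fun y => wMet gbar gtil f y (Fin.castAdd q a) (Fin.castAdd q b)) (Fin.castAdd q c) z
      = pd (fun x => gbar x a b) c (bpt z) := by
  have : (fun y => wMet gbar gtil f y (Fin.castAdd q a) (Fin.castAdd q b))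
      = fun y => gbar (bpt y) a b := funext fun y => wMet_bb gbar gtil f y a b
  rw [this, pd_comp_bpt_cast (fun x => gbar x a b) z c]

lemma pd_wMet_bb_f (z : Fin (p + q) → ℝ) (a b : Fin p) (δ : Fin q) :
    pd (fun y => wMet gbar gtil f y (Fin.castAdd q a) (Fin.castAdd q b)) (Fin.natAdd p δ) z
      = 0 := by
  have : (fun y => wMet gbar gtil f y (Fin.castAdd q a) (Fin.castAdd q b))
      = fun y => gbar (bpt y) a b := funext fun y => wMet_bb gbar gtil f y a b
  rw [this, pd_comp_bpt_nat (fun x => gbar x a b) z δ]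

lemma pd_wMet_bf (z : Fin (p + q) → ℝ) (a : Fin p) (β : Fin q) (j : Fin (p + q)) :
    pd (fun y => wMet gbar gtil f y (Fin.castAdd q a) (Fin.natAdd p β)) j z = 0 := by
  have : (fun y => wMet gbar gtil f y (Fin.castAdd q a) (Fin.natAdd p β))
      = fun _ => (0:ℝ) := funext fun y => wMet_bf gbar gtil f y a β
  rw [this, pd_const]

lemma pd_wMet_fb (z : Fin (p + q) → ℝ) (α : Fin q) (b : Fin p) (j : Fin (p + q)) :
    pd (fun y => wMet gbar gtil f y (Fin.natAdd p α) (Fin.castAdd q b)) j z = 0 := by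
  have : (fun y => wMet gbar gtil f y (Fin.natAdd p α) (Fin.castAdd q b))
      = fun _ => (0:ℝ) := funext fun y => wMet_fb gbar gtil f y α b
  rw [this, pd_const]

lemma pd_wMet_ff_b (z : Fin (p + q) → ℝ) (α β : Fin q) (c : Fin p)
    (hfd : DifferentiableAt ℝ f (bpt z))
    (hgd : DifferentiableAt ℝ (fun y => gtil y α β) (fpt z)) :
    pd (fun y => wMet gbar gtil f y (Fin.natAdd p α) (Fin.natAdd p β)) (Fin.castAdd q c) z
      = pd f c (bpt z) * gtil (fpt z) α β := by
  have : (fun y => wMet gbar gtil f y (Fin.natAdd p α) (Fin.natAdd p β))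
      = fun y => f (bpt y) * gtil (fpt y) α β := funext fun y => wMet_ff gbar gtil f y α β
  rw [this, pd_mul ((diff_comp_bpt_iff f z).mpr hfd)
    ((diff_comp_fpt_iff (fun y => gtil y α β) z).mpr hgd)]
  rw [pd_comp_bpt_cast f z c, pd_comp_fpt_cast (fun y => gtil y α β) z c]
  ring

lemma pd_wMet_ff_f (z : Fin (p + q) → ℝ) (α β δ : Fin q)
    (hfd : DifferentiableAt ℝ f (bpt z))
    (hgd : DifferentiableAt ℝ (fun y => gtil y α β) (fpt z)) :
    pd (fun y => wMet gbar gtil f y (Fin.natAdd p α) (Fin.natAdd p β)) (Fin.natAdd p δ) z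
      = f (bpt z) * pd (fun y => gtil y α β) δ (fpt z) := by
  have : (fun y => wMet gbar gtil f y (Fin.natAdd p α) (Fin.natAdd p β))
      = fun y => f (bpt y) * gtil (fpt y) α β := funext fun y => wMet_ff gbar gtil f y α β
  rw [this, pd_mul ((diff_comp_bpt_iff f z).mpr hfd)
    ((diff_comp_fpt_iff (fun y => gtil y α β) z).mpr hgd)]
  rw [pd_comp_bpt_nat f z δ, pd_comp_fpt_nat (fun y => gtil y α β) z δ]
  ring

open Matrix in
/-- Symmetry of a (pointwise) inverse of a symmetric matrix. -/
lemma inv_symm {k : ℕ} (A B : Fin k → Fin k → ℝ) (hA : ∀ a b, A a b = A b a)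
    (h : ∀ a b, (∑ c, A a c * B c b) = if a = b then (1 : ℝ) else 0) :
    ∀ a b, B a b = B b a := by
  classical
  let M : Matrix (Fin k) (Fin k) ℝ := Matrix.of A
  let N : Matrix (Fin k) (Fin k) ℝ := Matrix.of B
  have hMN : M * N = 1 := by
    ext a b; simp only [Matrix.mul_apply, M, N, Matrix.of_apply, Matrix.one_apply]
    exact h a b
  have hMT : Mᵀ = M := by
    ext a b; simp only [Matrix.transpose_apply, M, Matrix.of_apply]; exact hA b a
  have h1 : Nᵀ * M = 1 := by
    have := congrArg Matrix.transpose hMN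
    rw [Matrix.transpose_mul, hMT] at this
    simpa using this
  have hNT : Nᵀ = N := by
    calc Nᵀ = Nᵀ * (M * N) := by rw [hMN, mul_one]
      _ = (Nᵀ * M) * N := by rw [mul_assoc]
      _ = N := by rw [h1, one_mul]
  intro a b
  have := congrFun (congrFun hNT b) a
  simpa [N, Matrix.transpose_apply] using this

lemma isOpen_Mset {U : Set (Fin p → ℝ)} {V : Set (Fin q → ℝ)} (hU : IsOpen U) (hV : IsOpen V) :
    IsOpen (Mset U V) := by
  have : Mset U V = (bptCLM p q) ⁻¹' U ∩ (fptCLM p q) ⁻¹' V := by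
    ext z; simp [Mset, bptCLM_apply, fptCLM_apply]
  rw [this]
  exact ((hU.preimage (bptCLM p q).continuous).inter (hV.preimage (fptCLM p q).continuous))

lemma eventually_mset {U : Set (Fin p → ℝ)} {V : Set (Fin q → ℝ)} (hU : IsOpen U) (hV : IsOpen V)
    {z : Fin (p + q) → ℝ} (hz : z ∈ Mset U V) {F G : (Fin (p + q) → ℝ) → ℝ}
    (h : ∀ y ∈ Mset U V, F y = G y) : F =ᶠ[nhds z] G :=
  Filter.eventually_iff_exists_mem.mpr
    ⟨Mset U V, (isOpen_Mset hU hV).mem_nhds hz, h⟩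

end Components
section Toolkit2

lemma pd_cmul {k : ℕ} {v : (Fin k → ℝ) → ℝ} {x : Fin k → ℝ}
    (hv : DifferentiableAt ℝ v x) (c : ℝ) (j : Fin k) :
    pd (fun y => c * v y) j x = c * pd v j x := by
  unfold pd
  rw [fderiv_const_mul hv c]
  simp

lemma pd_div {k : ℕ} {u v : (Fin k → ℝ) → ℝ} {x : Fin k → ℝ}
    (hu : DifferentiableAt ℝ u x) (hv : DifferentiableAt ℝ v x) (h0 : v x ≠ 0) (j : Fin k) :
    pd (fun y => u y / v y) j x = (pd u j x * v x - u x * pd v j x) / (v x) ^ 2 := by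
  have hvinv : DifferentiableAt ℝ (fun y => (v y)⁻¹) x :=
    ((hasDerivAt_inv h0).comp_hasFDerivAt x hv.hasFDerivAt).differentiableAt
  have : (fun y => u y / v y) = fun y => u y * (v y)⁻¹ := by
    funext y; rw [div_eq_mul_inv]
  rw [this, pd_mul hu hvinv, pd_inv hv h0]
  field_simp
  ring

lemma diff_pd {k : ℕ} {F : (Fin k → ℝ) → ℝ} {U : Set (Fin k → ℝ)} (hU : IsOpen U)
    (hF : ContDiffOn ℝ (⊤ : ℕ∞) F U) {x : Fin k → ℝ} (hx : x ∈ U) (a : Fin k) :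
    DifferentiableAt ℝ (pd F a) x := by
  have h1 : ContDiffAt ℝ (⊤ : ℕ∞) F x := hF.contDiffAt (hU.mem_nhds hx)
  have h2 : ContDiffAt ℝ 1 (fderiv ℝ F) x := h1.fderiv_right (m := 1) (by exact WithTop.coe_le_coe.mpr le_top)
  have h3 : DifferentiableAt ℝ (fderiv ℝ F) x := h2.differentiableAt (by simp)
  have : pd F a = fun y =>
      (ContinuousLinearMap.apply ℝ ℝ (Pi.single a (1:ℝ))) (fderiv ℝ F y) := rfl
  rw [this]
  exact (ContinuousLinearMap.differentiableAt _).comp x h3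

lemma diff_of_contDiffOn {k : ℕ} {F : (Fin k → ℝ) → ℝ} {U : Set (Fin k → ℝ)} (hU : IsOpen U)
    (hF : ContDiffOn ℝ (⊤ : ℕ∞) F U) {x : Fin k → ℝ} (hx : x ∈ U) :
    DifferentiableAt ℝ F x :=
  ((hF.contDiffAt (hU.mem_nhds hx)).differentiableAt (by simp))

end Toolkit2

section ChristoffelLemmas

variable {p q : ℕ}
variable (gbar gbinv : (Fin p → ℝ) → Fin p → Fin p → ℝ)
variable (gtil gtinv : (Fin q → ℝ) → Fin q → Fin q → ℝ)
variable (f : (Fin p → ℝ) → ℝ)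

lemma Christ_bbb (z : Fin (p + q) → ℝ) (c a b : Fin p) :
    Christoffel (wMet gbar gtil f) (wMetInv gbinv gtinv f)
      (Fin.castAdd q c) (Fin.castAdd q a) (Fin.castAdd q b) z
      = Christoffel gbar gbinv c a b (bpt z) := by
  unfold Christoffel
  rw [Fin.sum_univ_add]
  simp only [wMetInv_bb, wMetInv_bf, pd_wMet_bb_b, pd_wMet_bb_f, pd_wMet_bf, pd_wMet_fb,
    zero_mul, mul_zero, Finset.sum_const_zero, add_zero, zero_add, sub_zero, sub_self]

lemma Christ_fbb (z : Fin (p + q) → ℝ) (γ : Fin q) (a b : Fin p) :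
    Christoffel (wMet gbar gtil f) (wMetInv gbinv gtinv f)
      (Fin.natAdd p γ) (Fin.castAdd q a) (Fin.castAdd q b) z = 0 := by
  unfold Christoffel
  rw [Fin.sum_univ_add]
  simp only [wMetInv_fb, wMetInv_ff, pd_wMet_bb_b, pd_wMet_bb_f, pd_wMet_bf, pd_wMet_fb,
    zero_mul, mul_zero, Finset.sum_const_zero, add_zero, zero_add, sub_zero, sub_self]

lemma Christ_bbf (z : Fin (p + q) → ℝ) (c a : Fin p) (β : Fin q) :
    Christoffel (wMet gbar gtil f) (wMetInv gbinv gtinv f)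
      (Fin.castAdd q c) (Fin.castAdd q a) (Fin.natAdd p β) z = 0 := by
  unfold Christoffel
  rw [Fin.sum_univ_add]
  simp only [wMetInv_bb, wMetInv_bf, pd_wMet_bb_f, pd_wMet_bf, pd_wMet_fb,
    zero_mul, mul_zero, Finset.sum_const_zero, add_zero, zero_add, sub_zero, sub_self]

lemma Christ_bfb (z : Fin (p + q) → ℝ) (c : Fin p) (β : Fin q) (a : Fin p) :
    Christoffel (wMet gbar gtil f) (wMetInv gbinv gtinv f)
      (Fin.castAdd q c) (Fin.natAdd p β) (Fin.castAdd q a) z = 0 := by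
  unfold Christoffel
  rw [Fin.sum_univ_add]
  simp only [wMetInv_bb, wMetInv_bf, pd_wMet_bb_f, pd_wMet_bf, pd_wMet_fb,
    zero_mul, mul_zero, Finset.sum_const_zero, add_zero, zero_add, sub_zero, sub_self]

lemma Christ_ffb (z : Fin (p + q) → ℝ)
    (hfd : DifferentiableAt ℝ f (bpt z))
    (hgd : ∀ α β, DifferentiableAt ℝ (fun y => gtil y α β) (fpt z))
    (hsym : ∀ a b, gtinv (fpt z) a b = gtinv (fpt z) b a)
    (htr : ∀ a b, (∑ c, gtil (fpt z) a c * gtinv (fpt z) c b) = if a = b then (1:ℝ) else 0)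
    (γ β : Fin q) (a : Fin p) :
    Christoffel (wMet gbar gtil f) (wMetInv gbinv gtinv f)
      (Fin.natAdd p γ) (Fin.natAdd p β) (Fin.castAdd q a) z
      = (if β = γ then pd f a (bpt z) / (2 * f (bpt z)) else 0) := by
  have hffb : ∀ α β c, pd (fun y => wMet gbar gtil f y (Fin.natAdd p α) (Fin.natAdd p β))
      (Fin.castAdd q c) z = pd f c (bpt z) * gtil (fpt z) α β :=
    fun α β c => pd_wMet_ff_b gbar gtil f z α β c hfd (hgd α β)
  unfold Christoffel
  rw [Fin.sum_univ_add]
  simp only [wMetInv_fb, wMetInv_ff, pd_wMet_bf, pd_wMet_fb, hffb,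
    zero_mul, mul_zero, Finset.sum_const_zero, add_zero, zero_add, sub_zero, zero_sub, neg_zero]
  have hstep : ∀ δ : Fin q, (f (bpt z))⁻¹ * gtinv (fpt z) γ δ * (pd f a (bpt z) * gtil (fpt z) β δ)
      = ((f (bpt z))⁻¹ * pd f a (bpt z)) * (gtil (fpt z) β δ * gtinv (fpt z) δ γ) := by
    intro δ; rw [hsym δ γ]; ring
  rw [Finset.sum_congr rfl (fun δ _ => hstep δ), ← Finset.mul_sum, htr β γ]
  by_cases h : β = γ
  · simp only [h, if_pos rfl, if_true]
    by_cases hf0 : f (bpt z) = 0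
    · simp [hf0]
    · field_simp
  · simp [h]

lemma Christ_fbf (z : Fin (p + q) → ℝ)
    (hfd : DifferentiableAt ℝ f (bpt z))
    (hgd : ∀ α β, DifferentiableAt ℝ (fun y => gtil y α β) (fpt z))
    (hgts : ∀ a b, gtil (fpt z) a b = gtil (fpt z) b a)
    (hsym : ∀ a b, gtinv (fpt z) a b = gtinv (fpt z) b a)
    (htr : ∀ a b, (∑ c, gtil (fpt z) a c * gtinv (fpt z) c b) = if a = b then (1:ℝ) else 0)
    (γ : Fin q) (a : Fin p) (β : Fin q) :
    Christoffel (wMet gbar gtil f) (wMetInv gbinv gtinv f)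
      (Fin.natAdd p γ) (Fin.castAdd q a) (Fin.natAdd p β) z
      = (if β = γ then pd f a (bpt z) / (2 * f (bpt z)) else 0) := by
  have hffb : ∀ α β c, pd (fun y => wMet gbar gtil f y (Fin.natAdd p α) (Fin.natAdd p β))
      (Fin.castAdd q c) z = pd f c (bpt z) * gtil (fpt z) α β :=
    fun α β c => pd_wMet_ff_b gbar gtil f z α β c hfd (hgd α β)
  unfold Christoffel
  rw [Fin.sum_univ_add]
  simp only [wMetInv_fb, wMetInv_ff, pd_wMet_bf, pd_wMet_fb, hffb,
    zero_mul, mul_zero, Finset.sum_const_zero, add_zero, zero_add, sub_zero, zero_sub, neg_zero]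
  have hstep : ∀ δ : Fin q, (f (bpt z))⁻¹ * gtinv (fpt z) γ δ * (pd f a (bpt z) * gtil (fpt z) δ β)
      = ((f (bpt z))⁻¹ * pd f a (bpt z)) * (gtil (fpt z) β δ * gtinv (fpt z) δ γ) := by
    intro δ; rw [hsym δ γ, hgts δ β]; ring
  rw [Finset.sum_congr rfl (fun δ _ => hstep δ), ← Finset.mul_sum, htr β γ]
  by_cases h : β = γ
  · simp only [h, if_pos rfl, if_true]
    by_cases hf0 : f (bpt z) = 0
    · simp [hf0]
    · field_simp
  · simp [h]

end ChristoffelLemmas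
section RiemLemmas

variable {p q : ℕ}
variable (gbar gbinv : (Fin p → ℝ) → Fin p → Fin p → ℝ)
variable (gtil gtinv : (Fin q → ℝ) → Fin q → Fin q → ℝ)
variable (f : (Fin p → ℝ) → ℝ)

lemma pdChrist_bbb_b (z : Fin (p + q) → ℝ) (e a b c : Fin p) :
    pd (Christoffel (wMet gbar gtil f) (wMetInv gbinv gtinv f)
      (Fin.castAdd q e) (Fin.castAdd q a) (Fin.castAdd q b)) (Fin.castAdd q c) z
      = pd (Christoffel gbar gbinv e a b) c (bpt z) := by
  have h : Christoffel (wMet gbar gtil f) (wMetInv gbinv gtinv f)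
      (Fin.castAdd q e) (Fin.castAdd q a) (Fin.castAdd q b)
      = fun y => Christoffel gbar gbinv e a b (bpt y) :=
    funext fun y => Christ_bbb gbar gbinv gtil gtinv f y e a b
  rw [h, pd_comp_bpt_cast (Christoffel gbar gbinv e a b) z c]

lemma pdChrist_bbb_f (z : Fin (p + q) → ℝ) (e a b : Fin p) (δ : Fin q) :
    pd (Christoffel (wMet gbar gtil f) (wMetInv gbinv gtinv f)
      (Fin.castAdd q e) (Fin.castAdd q a) (Fin.castAdd q b)) (Fin.natAdd p δ) z = 0 := by
  have h : Christoffel (wMet gbar gtil f) (wMetInv gbinv gtinv f)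
      (Fin.castAdd q e) (Fin.castAdd q a) (Fin.castAdd q b)
      = fun y => Christoffel gbar gbinv e a b (bpt y) :=
    funext fun y => Christ_bbb gbar gbinv gtil gtinv f y e a b
  rw [h, pd_comp_bpt_nat (Christoffel gbar gbinv e a b) z δ]

lemma pdChrist_fbb (z : Fin (p + q) → ℝ) (γ : Fin q) (a b : Fin p) (j : Fin (p + q)) :
    pd (Christoffel (wMet gbar gtil f) (wMetInv gbinv gtinv f)
      (Fin.natAdd p γ) (Fin.castAdd q a) (Fin.castAdd q b)) j z = 0 := by
  have h : Christoffel (wMet gbar gtil f) (wMetInv gbinv gtinv f)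
      (Fin.natAdd p γ) (Fin.castAdd q a) (Fin.castAdd q b) = fun _ => (0:ℝ) :=
    funext fun y => Christ_fbb gbar gbinv gtil gtinv f y γ a b
  rw [h, pd_const]

lemma pdChrist_bbf (z : Fin (p + q) → ℝ) (c a : Fin p) (β : Fin q) (j : Fin (p + q)) :
    pd (Christoffel (wMet gbar gtil f) (wMetInv gbinv gtinv f)
      (Fin.castAdd q c) (Fin.castAdd q a) (Fin.natAdd p β)) j z = 0 := by
  have h : Christoffel (wMet gbar gtil f) (wMetInv gbinv gtinv f)
      (Fin.castAdd q c) (Fin.castAdd q a) (Fin.natAdd p β) = fun _ => (0:ℝ) :=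
    funext fun y => Christ_bbf gbar gbinv gtil gtinv f y c a β
  rw [h, pd_const]

lemma pdChrist_bfb (z : Fin (p + q) → ℝ) (c : Fin p) (β : Fin q) (a : Fin p) (j : Fin (p + q)) :
    pd (Christoffel (wMet gbar gtil f) (wMetInv gbinv gtinv f)
      (Fin.castAdd q c) (Fin.natAdd p β) (Fin.castAdd q a)) j z = 0 := by
  have h : Christoffel (wMet gbar gtil f) (wMetInv gbinv gtinv f)
      (Fin.castAdd q c) (Fin.natAdd p β) (Fin.castAdd q a) = fun _ => (0:ℝ) :=
    funext fun y => Christ_bfb gbar gbinv gtil gtinv f y c β a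
  rw [h, pd_const]

lemma Riem_bbbb (z : Fin (p + q) → ℝ) (a b c d : Fin p) :
    Riem (wMet gbar gtil f) (wMetInv gbinv gtinv f) z
      (Fin.castAdd q a) (Fin.castAdd q b) (Fin.castAdd q c) (Fin.castAdd q d)
      = Riem gbar gbinv (bpt z) a b c d := by
  unfold Riem
  simp only [Fin.sum_univ_add]
  simp only [wMet_bb, wMet_bf, pdChrist_bbb_b, pdChrist_bbf, pdChrist_bfb, pdChrist_fbb,
    Christ_bbb, Christ_bbf, Christ_bfb, Christ_fbb,
    zero_mul, mul_zero, Finset.sum_const_zero, add_zero, zero_add, sub_zero]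

lemma Riem_fbbb (z : Fin (p + q) → ℝ) (β : Fin q) (b c d : Fin p) :
    Riem (wMet gbar gtil f) (wMetInv gbinv gtinv f) z
      (Fin.natAdd p β) (Fin.castAdd q b) (Fin.castAdd q c) (Fin.castAdd q d) = 0 := by
  unfold Riem
  simp only [Fin.sum_univ_add]
  simp only [wMet_fb, wMet_ff, pdChrist_fbb, Christ_fbb, Christ_bfb, Christ_bbf,
    zero_mul, mul_zero, Finset.sum_const_zero, add_zero, zero_add, sub_zero, sub_self]

lemma Riem_bfbb (z : Fin (p + q) → ℝ) (a : Fin p) (β : Fin q) (c d : Fin p) :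
    Riem (wMet gbar gtil f) (wMetInv gbinv gtinv f) z
      (Fin.castAdd q a) (Fin.natAdd p β) (Fin.castAdd q c) (Fin.castAdd q d) = 0 := by
  unfold Riem
  simp only [Fin.sum_univ_add]
  simp only [wMet_bb, wMet_bf, pdChrist_bbf, Christ_bbf, Christ_bfb, Christ_fbb,
    zero_mul, mul_zero, Finset.sum_const_zero, add_zero, zero_add, sub_zero, sub_self]

lemma Riem_bbfb (z : Fin (p + q) → ℝ) (a b : Fin p) (γ : Fin q) (d : Fin p) :
    Riem (wMet gbar gtil f) (wMetInv gbinv gtinv f) z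
      (Fin.castAdd q a) (Fin.castAdd q b) (Fin.natAdd p γ) (Fin.castAdd q d) = 0 := by
  unfold Riem
  simp only [Fin.sum_univ_add]
  simp only [wMet_bb, wMet_bf, pdChrist_bbb_f, pdChrist_bfb, pdChrist_bbf, Christ_bfb,
    Christ_bbf, Christ_fbb, Christ_bbb,
    zero_mul, mul_zero, Finset.sum_const_zero, add_zero, zero_add, sub_zero, sub_self]

lemma Riem_bbbf (z : Fin (p + q) → ℝ) (a b c : Fin p) (δ : Fin q) :
    Riem (wMet gbar gtil f) (wMetInv gbinv gtinv f) z
      (Fin.castAdd q a) (Fin.castAdd q b) (Fin.castAdd q c) (Fin.natAdd p δ) = 0 := by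
  unfold Riem
  simp only [Fin.sum_univ_add]
  simp only [wMet_bb, wMet_bf, pdChrist_bbb_f, pdChrist_bfb, pdChrist_bbf, Christ_bfb,
    Christ_bbf, Christ_fbb, Christ_bbb,
    zero_mul, mul_zero, Finset.sum_const_zero, add_zero, zero_add, sub_zero, sub_self]

end RiemLemmas
section R3

variable {p q : ℕ}
variable (gbar gbinv : (Fin p → ℝ) → Fin p → Fin p → ℝ)
variable (gtil gtinv : (Fin q → ℝ) → Fin q → Fin q → ℝ)
variable (f : (Fin p → ℝ) → ℝ)
variable {U : Set (Fin p → ℝ)} {V : Set (Fin q → ℝ)}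

lemma Riem_fbfb (hU : IsOpen U) (hV : IsOpen V)
    (hgt : ∀ a b, ContDiffOn ℝ (⊤ : ℕ∞) (fun y => gtil y a b) V)
    (hgts : ∀ y ∈ V, ∀ a b, gtil y a b = gtil y b a)
    (hgti : ∀ y ∈ V, ∀ a b, (∑ c, gtil y a c * gtinv y c b) = if a = b then (1 : ℝ) else 0)
    (hf : ContDiffOn ℝ (⊤ : ℕ∞) f U)
    (hfpos : ∀ x ∈ U, 0 < f x)
    {z : Fin (p + q) → ℝ} (hz : z ∈ Mset U V)
    (α : Fin q) (a : Fin p) (β : Fin q) (b : Fin p) :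
    Riem (wMet gbar gtil f) (wMetInv gbinv gtinv f) z
      (Fin.natAdd p α) (Fin.castAdd q a) (Fin.natAdd p β) (Fin.castAdd q b)
      = f (bpt z) * gtil (fpt z) α β * Tten gbar gbinv f (bpt z) a b := by
  obtain ⟨hzU, hzV⟩ := hz
  have hdf : DifferentiableAt ℝ f (bpt z) := diff_of_contDiffOn hU hf hzU
  have hgd : ∀ α β, DifferentiableAt ℝ (fun y => gtil y α β) (fpt z) :=
    fun α β => diff_of_contDiffOn hV (hgt α β) hzV
  have hsymz : ∀ a b, gtinv (fpt z) a b = gtinv (fpt z) b a :=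
    inv_symm (gtil (fpt z)) (gtinv (fpt z)) (hgts _ hzV) (hgti _ hzV)
  have hffbz : ∀ γ β a, Christoffel (wMet gbar gtil f) (wMetInv gbinv gtinv f)
      (Fin.natAdd p γ) (Fin.natAdd p β) (Fin.castAdd q a) z
      = (if β = γ then pd f a (bpt z) / (2 * f (bpt z)) else 0) :=
    fun γ β a => Christ_ffb gbar gbinv gtil gtinv f z hdf hgd hsymz (hgti _ hzV) γ β a
  have hfbfz : ∀ γ a β, Christoffel (wMet gbar gtil f) (wMetInv gbinv gtinv f)
      (Fin.natAdd p γ) (Fin.castAdd q a) (Fin.natAdd p β) z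
      = (if β = γ then pd f a (bpt z) / (2 * f (bpt z)) else 0) :=
    fun γ a β => Christ_fbf gbar gbinv gtil gtinv f z hdf hgd (hgts _ hzV) hsymz
      (hgti _ hzV) γ a β
  have hpdffb : ∀ γ β a b, pd (Christoffel (wMet gbar gtil f) (wMetInv gbinv gtinv f)
      (Fin.natAdd p γ) (Fin.natAdd p β) (Fin.castAdd q a)) (Fin.castAdd q b) z
      = (if β = γ then pd (fun x => pd f a x / (2 * f x)) b (bpt z) else 0) := by
    intro γ β a b
    have hev : Christoffel (wMet gbar gtil f) (wMetInv gbinv gtinv f)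
        (Fin.natAdd p γ) (Fin.natAdd p β) (Fin.castAdd q a)
        =ᶠ[nhds z] (fun y => if β = γ then pd f a (bpt y) / (2 * f (bpt y)) else 0) := by
      refine eventually_mset hU hV ⟨hzU, hzV⟩ (fun y hy => ?_)
      exact Christ_ffb gbar gbinv gtil gtinv f y (diff_of_contDiffOn hU hf hy.1)
        (fun α β => diff_of_contDiffOn hV (hgt α β) hy.2)
        (inv_symm (gtil (fpt y)) (gtinv (fpt y)) (hgts _ hy.2) (hgti _ hy.2))
        (hgti _ hy.2) γ β a
    rw [pd_congr hev]
    by_cases h : β = γ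
    · have : (fun y : Fin (p + q) → ℝ => if β = γ then pd f a (bpt y) / (2 * f (bpt y)) else 0)
          = fun y => (fun x => pd f a x / (2 * f x)) (bpt y) := by
        funext y; simp [h]
      rw [this, pd_comp_bpt_cast (fun x => pd f a x / (2 * f x)) z b, if_pos h]
    · have : (fun y : Fin (p + q) → ℝ => if β = γ then pd f a (bpt y) / (2 * f (bpt y)) else 0)
          = fun _ => (0:ℝ) := by
        funext y; simp [h]
      rw [this, pd_const, if_neg h]
  have hf0 : f (bpt z) ≠ 0 := ne_of_gt (hfpos _ hzU)
  have hpdQ : pd (fun x => pd f a x / (2 * f x)) b (bpt z)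
      = (pd (pd f a) b (bpt z) * (2 * f (bpt z)) - pd f a (bpt z) * (2 * pd f b (bpt z)))
        / (2 * f (bpt z)) ^ 2 := by
    have h2f : DifferentiableAt ℝ (fun x => 2 * f x) (bpt z) := hdf.const_mul 2
    rw [pd_div (diff_pd hU hf hzU a) h2f (by simp [hf0])]
    rw [pd_cmul hdf 2 b]
  unfold Riem
  simp only [Fin.sum_univ_add]
  simp only [wMet_fb, wMet_ff, pdChrist_fbb, hpdffb, hffbz, hfbfz,
    Christ_bbb, Christ_fbb, Christ_bfb,
    zero_mul, mul_zero, Finset.sum_const_zero, add_zero, zero_add, zero_sub, sub_zero]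
  simp only [ite_mul, mul_ite, zero_mul, mul_zero, Finset.sum_ite_eq, Finset.sum_ite_eq',
    Finset.mem_univ, if_true, Finset.sum_const_zero]
  have hsummand : ∀ x : Fin q,
      f (bpt z) * gtil (fpt z) α x *
        (((-if β = x then pd (fun x => pd f a x / (2 * f x)) b (bpt z) else 0) +
            ∑ e : Fin p, if β = x then
              pd f e (bpt z) / (2 * f (bpt z)) * Christoffel gbar gbinv e b a (bpt z) else 0) -
          if β = x then
            pd f b (bpt z) / (2 * f (bpt z)) * (pd f a (bpt z) / (2 * f (bpt z))) else 0)
      = (if β = x then f (bpt z) * gtil (fpt z) α x *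
          ((-(pd (fun x => pd f a x / (2 * f x)) b (bpt z)) +
            ∑ e : Fin p, pd f e (bpt z) / (2 * f (bpt z)) * Christoffel gbar gbinv e b a (bpt z)) -
            pd f b (bpt z) / (2 * f (bpt z)) * (pd f a (bpt z) / (2 * f (bpt z)))) else 0) := by
    intro x; by_cases h : β = x <;> simp [h]
  rw [Finset.sum_congr rfl (fun x _ => hsummand x), Finset.sum_ite_eq]
  simp only [Finset.mem_univ, if_true]
  rw [hpdQ]
  have hS : ∑ e : Fin p, pd f e (bpt z) / (2 * f (bpt z)) * Christoffel gbar gbinv e b a (bpt z)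
      = (∑ c, Christoffel gbar gbinv c b a (bpt z) * pd f c (bpt z)) / (2 * f (bpt z)) := by
    rw [Finset.sum_div]; exact Finset.sum_congr rfl (fun e _ => by ring)
  rw [hS]
  unfold Tten
  rw [show pd (fun y => pd f a y) b (bpt z) = pd (pd f a) b (bpt z) from rfl]
  field_simp
  ring

end R3
section RicCov

variable {p q : ℕ}
variable (gbar gbinv : (Fin p → ℝ) → Fin p → Fin p → ℝ)
variable (gtil gtinv : (Fin q → ℝ) → Fin q → Fin q → ℝ)
variable (f : (Fin p → ℝ) → ℝ)
variable {U : Set (Fin p → ℝ)} {V : Set (Fin q → ℝ)}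

lemma Ric_bb (hU : IsOpen U) (hV : IsOpen V)
    (hgt : ∀ a b, ContDiffOn ℝ (⊤ : ℕ∞) (fun y => gtil y a b) V)
    (hgts : ∀ y ∈ V, ∀ a b, gtil y a b = gtil y b a)
    (hgti : ∀ y ∈ V, ∀ a b, (∑ c, gtil y a c * gtinv y c b) = if a = b then (1 : ℝ) else 0)
    (hf : ContDiffOn ℝ (⊤ : ℕ∞) f U)
    (hfpos : ∀ x ∈ U, 0 < f x)
    {z : Fin (p + q) → ℝ} (hz : z ∈ Mset U V)
    (a b : Fin p) :
    Ric (wMet gbar gtil f) (wMetInv gbinv gtinv f) z (Fin.castAdd q a) (Fin.castAdd q b)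
      = Ric gbar gbinv (bpt z) a b + (q : ℝ) * Tten gbar gbinv f (bpt z) a b := by
  have hf0 : f (bpt z) ≠ 0 := ne_of_gt (hfpos _ hz.1)
  have hR3 : ∀ γ δ : Fin q, Riem (wMet gbar gtil f) (wMetInv gbinv gtinv f) z
      (Fin.natAdd p γ) (Fin.castAdd q a) (Fin.natAdd p δ) (Fin.castAdd q b)
      = f (bpt z) * gtil (fpt z) γ δ * Tten gbar gbinv f (bpt z) a b :=
    fun γ δ => Riem_fbfb gbar gbinv gtil gtinv f hU hV hgt hgts hgti hf hfpos hz γ a δ b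
  unfold Ric
  simp only [Fin.sum_univ_add]
  simp only [wMetInv_bb, wMetInv_bf, wMetInv_fb, wMetInv_ff, Riem_bbbb, hR3,
    zero_mul, mul_zero, Finset.sum_const_zero, add_zero, zero_add]
  have htr : ∑ γ : Fin q, ∑ δ : Fin q,
      (f (bpt z))⁻¹ * gtinv (fpt z) γ δ *
        (f (bpt z) * gtil (fpt z) γ δ * Tten gbar gbinv f (bpt z) a b)
      = (q : ℝ) * Tten gbar gbinv f (bpt z) a b := by
    have h1 : ∀ γ δ : Fin q, (f (bpt z))⁻¹ * gtinv (fpt z) γ δ *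
        (f (bpt z) * gtil (fpt z) γ δ * Tten gbar gbinv f (bpt z) a b)
        = (gtil (fpt z) δ γ * gtinv (fpt z) γ δ) * Tten gbar gbinv f (bpt z) a b := by
      intro γ δ
      rw [hgts _ hz.2 δ γ]
      field_simp
    rw [Finset.sum_congr rfl (fun γ _ => Finset.sum_congr rfl (fun δ _ => h1 γ δ))]
    rw [Finset.sum_comm]
    have h2 : ∀ δ : Fin q, (∑ γ : Fin q,
        (gtil (fpt z) δ γ * gtinv (fpt z) γ δ) * Tten gbar gbinv f (bpt z) a b)
        = Tten gbar gbinv f (bpt z) a b := by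
      intro δ
      rw [← Finset.sum_mul, hgti _ hz.2 δ δ]
      simp
    rw [Finset.sum_congr rfl (fun δ _ => h2 δ)]
    simp [Finset.sum_const, Finset.card_univ]
  rw [htr]

lemma cov4_bf (z : Fin (p + q) → ℝ) (a b c d : Fin p) (δ : Fin q) :
    cov4 (wMet gbar gtil f) (wMetInv gbinv gtinv f)
      (Riem (wMet gbar gtil f) (wMetInv gbinv gtinv f)) z
      (Fin.castAdd q a) (Fin.castAdd q b) (Fin.castAdd q c) (Fin.castAdd q d)
      (Fin.natAdd p δ) = 0 := by
  unfold cov4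
  have hpd : pd (fun y => Riem (wMet gbar gtil f) (wMetInv gbinv gtinv f) y
      (Fin.castAdd q a) (Fin.castAdd q b) (Fin.castAdd q c) (Fin.castAdd q d))
      (Fin.natAdd p δ) z = 0 := by
    have h : (fun y => Riem (wMet gbar gtil f) (wMetInv gbinv gtinv f) y
        (Fin.castAdd q a) (Fin.castAdd q b) (Fin.castAdd q c) (Fin.castAdd q d))
        = fun y => Riem gbar gbinv (bpt y) a b c d :=
      funext fun y => Riem_bbbb gbar gbinv gtil gtinv f y a b c d
    rw [h, pd_comp_bpt_nat (fun x => Riem gbar gbinv x a b c d) z δ]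
  rw [hpd]
  simp only [Fin.sum_univ_add]
  simp only [Christ_bfb, Riem_fbbb, Riem_bfbb, Riem_bbfb, Riem_bbbf,
    zero_mul, mul_zero, Finset.sum_const_zero, add_zero, zero_add, sub_zero, zero_sub, neg_zero]

end RicCov

/-- Corollary 4.1(ii): the base of a warped product SGK manifold is of generalized Roter type
wherever the fiber part of the 1-form Π is nonzero. -/
theorem base_of_warped_SGK_is_GRT
    {p q : ℕ} (hp : 1 ≤ p) (hq : 1 ≤ q)
    (U : Set (Fin p → ℝ)) (V : Set (Fin q → ℝ))
    (hU : IsOpen U) (hV : IsOpen V)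
    (gbar gbinv : (Fin p → ℝ) → Fin p → Fin p → ℝ)
    (gtil gtinv : (Fin q → ℝ) → Fin q → Fin q → ℝ)
    (f : (Fin p → ℝ) → ℝ)
    (hgb : ∀ a b, ContDiffOn ℝ (⊤ : ℕ∞) (fun x => gbar x a b) U)
    (hgbs : ∀ x ∈ U, ∀ a b, gbar x a b = gbar x b a)
    (hgbi : ∀ x ∈ U, ∀ a b, (∑ c, gbar x a c * gbinv x c b) = if a = b then (1 : ℝ) else 0)
    (hgt : ∀ a b, ContDiffOn ℝ (⊤ : ℕ∞) (fun y => gtil y a b) V)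
    (hgts : ∀ y ∈ V, ∀ a b, gtil y a b = gtil y b a)
    (hgti : ∀ y ∈ V, ∀ a b, (∑ c, gtil y a c * gtinv y c b) = if a = b then (1 : ℝ) else 0)
    (hf : ContDiffOn ℝ (⊤ : ℕ∞) f U)
    (hfpos : ∀ x ∈ U, 0 < f x)
    (piF phiF psiF thetaF : (Fin (p + q) → ℝ) → Fin (p + q) → ℝ)
    (hpiF : ∀ m, ContDiffOn ℝ (⊤ : ℕ∞) (fun z => piF z m) (Mset U V))
    (hphiF : ∀ m, ContDiffOn ℝ (⊤ : ℕ∞) (fun z => phiF z m) (Mset U V))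
    (hpsiF : ∀ m, ContDiffOn ℝ (⊤ : ℕ∞) (fun z => psiF z m) (Mset U V))
    (hthetaF : ∀ m, ContDiffOn ℝ (⊤ : ℕ∞) (fun z => thetaF z m) (Mset U V))
    (hsgk : ∀ z ∈ Mset U V, SGK (wMet gbar gtil f) (wMetInv gbinv gtinv f) piF phiF psiF thetaF z) :
    ∀ z ∈ Mset U V, (∃ ε : Fin q, piF z (Fin.natAdd p ε) ≠ 0) →
      ∃ L₁ L₂ L₃ L₄ L₅ L₆ : ℝ, ∀ a b c d : Fin p,
        Riem gbar gbinv (bpt z) a b c d =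
          L₁ * KN gbar gbar (bpt z) a b c d - L₂ * KN gbar (Ric gbar gbinv) (bpt z) a b c d - L₃ * KN (Ric gbar gbinv) (Ric gbar gbinv) (bpt z) a b c d
          - L₄ * KN gbar (Tten gbar gbinv f) (bpt z) a b c d - L₅ * KN (Ric gbar gbinv) (Tten gbar gbinv f) (bpt z) a b c d - L₆ * KN (Tten gbar gbinv f) (Tten gbar gbinv f) (bpt z) a b c d := by
  intro z hz hex
  obtain ⟨ε, hπ⟩ := hex
  have hRic : ∀ a b : Fin p, Ric (wMet gbar gtil f) (wMetInv gbinv gtinv f) z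
      (Fin.castAdd q a) (Fin.castAdd q b)
      = Ric gbar gbinv (bpt z) a b + (q : ℝ) * Tten gbar gbinv f (bpt z) a b :=
    fun a b => Ric_bb gbar gbinv gtil gtinv f hU hV hgt hgts hgti hf hfpos hz a b
  refine ⟨-(thetaF z (Fin.natAdd p ε)) / (piF z (Fin.natAdd p ε)),
    psiF z (Fin.natAdd p ε) / piF z (Fin.natAdd p ε),
    phiF z (Fin.natAdd p ε) / piF z (Fin.natAdd p ε),
    (q : ℝ) * psiF z (Fin.natAdd p ε) / piF z (Fin.natAdd p ε),
    2 * (q : ℝ) * phiF z (Fin.natAdd p ε) / piF z (Fin.natAdd p ε),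
    (q : ℝ) ^ 2 * phiF z (Fin.natAdd p ε) / piF z (Fin.natAdd p ε), ?_⟩
  intro a b c d
  have heq := hsgk z hz (Fin.castAdd q a) (Fin.castAdd q b) (Fin.castAdd q c)
    (Fin.castAdd q d) (Fin.natAdd p ε)
  rw [cov4_bf gbar gbinv gtil gtinv f z a b c d ε] at heq
  simp only [KN, wMet_bb, Riem_bbbb, hRic] at heq
  simp only [KN]
  field_simp
  linear_combination (-1 : ℝ) * heq
end
end
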